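/- arXiv:2401.12833 — 9 statements merged into one kernel-verified Lean document; each statement's English description precedes it below -/
import Mathlib

section
/- For every i ∈ V and all pairwise distinct k₁, k₂, k₃ ∈ V ∖ {i, ī}, the three vectors α(i,k₁), α(i,k₂), α(i,k₃) ∈ ℤ^{n+1} are linearly independent (over ℚ); that is, the GKM graph 𝒬_{2n} is three-independent. -/
noncomputable section

/-- Standard basis vector `e_k` of `ℤ^{n+1}` (1-indexed), with `e 0 = 0`. -/
def ee (n k : ℕ) : Fin (n+1) → ℤ := fun t => if (t : ℕ) + 1 = k then 1 else 0

/-- The function `h : V → ℤ^{n+1}`. -/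
def hh (n j : ℕ) : Fin (n+1) → ℤ :=
  if j ≤ n+2 then ee n (j-1) - ee n (n+1) else ee n n - ee n (2*n+2-j)

/-- The Laurent polynomial ring `R = ℤ[y₁^{±1},…,y_{n+1}^{±1}]`. -/
abbrev Rg (n : ℕ) : Type := AddMonoidAlgebra ℤ (Fin (n+1) → ℤ)

/-- The monomial `e^w`. -/
def ex (n : ℕ) (w : Fin (n+1) → ℤ) : Rg n := AddMonoidAlgebra.single w 1

/-- `ī = 2n+3-i`. -/
def bar (n i : ℕ) : ℕ := 2*n+3 - i

/-- Membership in the vertex set `V = {1,…,2n+2}`. -/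
def memV (n i : ℕ) : Prop := 1 ≤ i ∧ i ≤ 2*n+2

/-- The axial function `α(i,j) = h(j) - h(i)`. -/
def axl (n i j : ℕ) : Fin (n+1) → ℤ := hh n j - hh n i

/-- The K-class `M_v`. -/
def Mv (n v : ℕ) (l : ℕ) : Rg n :=
  if l = v then 1
  else if l = bar n v then ex n (ee n n - ee n (n+1) - (2:ℤ) • hh n (bar n v))
  else ex n (hh n v - hh n l)

/-- The pointwise inverse `M_v⁻¹`. -/
def MvInv (n v : ℕ) (l : ℕ) : Rg n :=
  if l = v then 1
  else if l = bar n v then ex n (-(ee n n - ee n (n+1) - (2:ℤ) • hh n (bar n v)))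
  else ex n (hh n l - hh n v)

/-- A subset `P ⊆ V` is admissible if it is nonempty and contains no pair `{i, ī}`. -/
def admissible (n : ℕ) (P : Finset ℕ) : Prop :=
  P.Nonempty ∧ (∀ i ∈ P, memV n i) ∧ (∀ i ∈ P, bar n i ∉ P)

/-- The vertex set as a finset. -/
def Vfin (n : ℕ) : Finset ℕ := Finset.Icc 1 (2*n+2)

/-- The Thom class `Δ_P`. -/
def Dl (n : ℕ) (P : Finset ℕ) (l : ℕ) : Rg n :=
  if l ∈ P then
    ∏ k ∈ (Vfin n).filter (fun k => k ∉ P ∧ k ≠ bar n l), (1 - ex n (axl n l k))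
  else 0

/-- `φ : V → R` is a K-class if `1 - e^{α(i,j)}` divides `φ(i) - φ(j)` for every edge `(i,j)`. -/
def isKClass (n : ℕ) (f : ℕ → Rg n) : Prop :=
  ∀ i j : ℕ, memV n i → memV n j → j ≠ i → j ≠ bar n i →
    (1 - ex n (axl n i j)) ∣ (f i - f j)


namespace TIaux

def wgt (n m' : ℕ) (t : Fin (n+1)) : ℚ :=
  if m' = 0 then 1
  else if m' = n then (if (t:ℕ) = n-1 then 1 else 0) - (if (t:ℕ) = n then 1 else 0)
  else if (t:ℕ) = m'-1 then 1 else 0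

def Phi (n m' : ℕ) (v : Fin (n+1) → ℚ) : ℚ := ∑ t, wgt n m' t * v t

def mIdx (n j : ℕ) : ℕ :=
  if j = 1 ∨ j = 2*n+2 then 0
  else if j = n+1 ∨ j = n+2 then n
  else if j ≤ n then j - 1 else 2*n+2 - j

def sgn (n j : ℕ) : ℚ := if (2 ≤ j ∧ j ≤ n+1) ∨ j = 2*n+2 then 1 else -1

def G (n j m : ℕ) : ℚ := if m = mIdx n j then sgn n j else 0

lemma G_self (n j m : ℕ) (h : m = mIdx n j) : G n j m = sgn n j := by simp [G, h]

lemma G_ne (n j m : ℕ) (h : m ≠ mIdx n j) : G n j m = 0 := by simp [G, h]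

lemma sgn_cases (n j : ℕ) : sgn n j = 1 ∨ sgn n j = -1 := by
  unfold sgn; split_ifs <;> simp

lemma mIdx_le (n j : ℕ) (hj : memV n j) : mIdx n j ≤ n := by
  obtain ⟨h1, h2⟩ := hj; unfold mIdx; split_ifs <;> omega

lemma mIdx_inj (n a b : ℕ) (ha : memV n a) (hb : memV n b) (h : mIdx n a = mIdx n b) :
    a = b ∨ a = bar n b := by
  obtain ⟨ha1, ha2⟩ := ha; obtain ⟨hb1, hb2⟩ := hb
  unfold mIdx at h; unfold bar
  split_ifs at h <;> omega

lemma sgn_bar (n j : ℕ) (hn : 1 ≤ n) (hj : memV n j) : sgn n (bar n j) = - sgn n j := by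
  obtain ⟨h1, h2⟩ := hj; unfold sgn bar
  split_ifs <;> first | (exfalso; omega) | norm_num

lemma sum_coord (n a : ℕ) (ha : a < n+1) (v : Fin (n+1) → ℚ) :
    (∑ t : Fin (n+1), if (t:ℕ) = a then v t else 0) = v ⟨a, ha⟩ := by
  rw [Finset.sum_eq_single (⟨a, ha⟩ : Fin (n+1))]
  · simp
  · intro t _ hne
    rw [if_neg]
    exact fun h => hne (Fin.ext h)
  · intro h; exact absurd (Finset.mem_univ _) h

lemma sum_ee (n k : ℕ) : (∑ t : Fin (n+1), ((ee n k t : ℤ) : ℚ)) =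
    if 1 ≤ k ∧ k ≤ n+1 then 1 else 0 := by
  unfold ee
  by_cases h : 1 ≤ k ∧ k ≤ n+1
  · rw [if_pos h, Finset.sum_eq_single (⟨k-1, by omega⟩ : Fin (n+1))]
    · rw [if_pos (by simp only [Fin.val_mk]; omega)]; norm_num
    · intro t _ hne
      have ht := t.isLt
      rw [if_neg, Int.cast_zero]
      intro hc
      exact hne (Fin.ext (by simp only [Fin.val_mk]; omega))
    · intro h'; exact absurd (Finset.mem_univ _) h'
  · rw [if_neg h]
    apply Finset.sum_eq_zero
    intro t _
    have := t.isLt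
    rw [if_neg (by omega), Int.cast_zero]

lemma Phi_zero (n : ℕ) (v : Fin (n+1) → ℚ) : Phi n 0 v = ∑ t, v t := by
  simp [Phi, wgt]

lemma Phi_n (n : ℕ) (hn : 1 ≤ n) (v : Fin (n+1) → ℚ) :
    Phi n n v = v ⟨n-1, by omega⟩ - v ⟨n, by omega⟩ := by
  unfold Phi wgt
  simp only [if_neg (by omega : ¬ n = 0), if_pos rfl, if_true, sub_mul, ite_mul, one_mul, zero_mul]
  rw [Finset.sum_sub_distrib, sum_coord n (n-1) (by omega), sum_coord n n (by omega)]

lemma Phi_mid (n m' : ℕ) (h0 : m' ≠ 0) (hne : m' ≠ n) (hm : m' ≤ n) (v : Fin (n+1) → ℚ) :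
    Phi n m' v = v ⟨m'-1, by omega⟩ := by
  unfold Phi wgt
  simp only [if_neg h0, if_neg hne, ite_mul, one_mul, zero_mul]
  exact sum_coord n (m'-1) (by omega) v


set_option maxHeartbeats 2000000 in
lemma Phi_hh (n : ℕ) (hn : 1 ≤ n) (j m' : ℕ) (hj : memV n j) (hm : m' ≤ n) :
    Phi n m' (fun t => ((hh n j t : ℤ) : ℚ)) = G n j m' + (if m' = n then 1 else 0) := by
  obtain ⟨hj1, hj2⟩ := hj
  by_cases h0 : m' = 0
  · subst h0
    rw [Phi_zero]
    unfold hh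
    by_cases hc : j ≤ n+2
    · simp only [hh, if_pos hc, Pi.sub_apply, Int.cast_sub]
      rw [Finset.sum_sub_distrib, sum_ee, sum_ee]
      simp only [G, mIdx, sgn]
      split_ifs <;> first | (exfalso; omega) | norm_num
    · simp only [hh, if_neg hc, Pi.sub_apply, Int.cast_sub]
      rw [Finset.sum_sub_distrib, sum_ee, sum_ee]
      simp only [G, mIdx, sgn]
      split_ifs <;> first | (exfalso; omega) | norm_num
  · by_cases hnn : m' = n
    · rw [hnn, Phi_n n hn]
      by_cases hc : j ≤ n+2
      · simp only [hh, if_pos hc, Pi.sub_apply, Int.cast_sub, ee, Fin.val_mk]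
        simp only [G, mIdx, sgn, hnn]
        split_ifs <;> first | (exfalso; omega) | norm_num
      · simp only [hh, if_neg hc, Pi.sub_apply, Int.cast_sub, ee, Fin.val_mk]
        simp only [G, mIdx, sgn, hnn]
        split_ifs <;> first | (exfalso; omega) | norm_num
    · rw [Phi_mid n m' h0 hnn hm]
      by_cases hc : j ≤ n+2
      · simp only [hh, if_pos hc, Pi.sub_apply, Int.cast_sub, ee, Fin.val_mk]
        simp only [G, mIdx, sgn]
        split_ifs <;> first | (exfalso; omega) | norm_num
      · simp only [hh, if_neg hc, Pi.sub_apply, Int.cast_sub, ee, Fin.val_mk]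
        simp only [G, mIdx, sgn]
        split_ifs <;> first | (exfalso; omega) | norm_num


lemma Phi_sub (n m' : ℕ) (u w : Fin (n+1) → ℚ) :
    Phi n m' (fun t => u t - w t) = Phi n m' u - Phi n m' w := by
  simp [Phi, mul_sub, Finset.sum_sub_distrib]

lemma Phi_comb (n m' : ℕ) (a b c : ℚ) (u v w : Fin (n+1) → ℚ) :
    Phi n m' (fun t => a * u t + b * v t + c * w t)
      = a * Phi n m' u + b * Phi n m' v + c * Phi n m' w := by
  unfold Phi
  rw [Finset.mul_sum, Finset.mul_sum, Finset.mul_sum, ← Finset.sum_add_distrib,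
    ← Finset.sum_add_distrib]
  exact Finset.sum_congr rfl fun t _ => by ring

lemma Phi_axl (n : ℕ) (hn : 1 ≤ n) (i j m' : ℕ) (hi : memV n i) (hj : memV n j)
    (hm : m' ≤ n) :
    Phi n m' (fun t => ((axl n i j t : ℤ) : ℚ)) = G n j m' - G n i m' := by
  have heq : (fun t => ((axl n i j t : ℤ) : ℚ))
      = fun t => ((hh n j t : ℤ) : ℚ) - ((hh n i t : ℤ) : ℚ) := by
    funext t
    simp [axl]
  rw [heq, Phi_sub, Phi_hh n hn j m' hj hm, Phi_hh n hn i m' hi hm]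
  ring

end TIaux

/-- The GKM graph `𝒬_{2n}` is three-independent: for every `i ∈ V` and
pairwise distinct `k₁, k₂, k₃ ∈ V ∖ {i, ī}`, the vectors `α(i,k₁), α(i,k₂), α(i,k₃)`
are linearly independent over `ℚ`. -/
theorem three_independent (n : ℕ) (hn : 1 ≤ n) (i k₁ k₂ k₃ : ℕ)
    (hi : memV n i) (hk₁ : memV n k₁) (hk₂ : memV n k₂) (hk₃ : memV n k₃)
    (h₁i : k₁ ≠ i) (h₁ib : k₁ ≠ bar n i) (h₂i : k₂ ≠ i) (h₂ib : k₂ ≠ bar n i)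
    (h₃i : k₃ ≠ i) (h₃ib : k₃ ≠ bar n i)
    (h12 : k₁ ≠ k₂) (h13 : k₁ ≠ k₃) (h23 : k₂ ≠ k₃) :
    LinearIndependent ℚ
      ![(fun t => ((axl n i k₁ t : ℤ) : ℚ)),
        (fun t => ((axl n i k₂ t : ℤ) : ℚ)),
        (fun t => ((axl n i k₃ t : ℤ) : ℚ))] := by
  classical
  open TIaux in
  rw [Fintype.linearIndependent_iff]
  intro g hg
  set v₁ : Fin (n+1) → ℚ := fun t => ((axl n i k₁ t : ℤ) : ℚ) with hv₁
  set v₂ : Fin (n+1) → ℚ := fun t => ((axl n i k₂ t : ℤ) : ℚ) with hv₂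
  set v₃ : Fin (n+1) → ℚ := fun t => ((axl n i k₃ t : ℤ) : ℚ) with hv₃
  have hgt : ∀ t, g 0 * v₁ t + g 1 * v₂ t + g 2 * v₃ t = 0 := by
    intro t
    have h := congrFun hg t
    simpa [Fin.sum_univ_three, mul_comm] using h
  have eqn : ∀ m', m' ≤ n →
      g 0 * (TIaux.G n k₁ m' - TIaux.G n i m') + g 1 * (TIaux.G n k₂ m' - TIaux.G n i m')
        + g 2 * (TIaux.G n k₃ m' - TIaux.G n i m') = 0 := by
    intro m' hm'
    have hz : TIaux.Phi n m' (fun t => g 0 * v₁ t + g 1 * v₂ t + g 2 * v₃ t) = 0 := by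
      simp [TIaux.Phi, hgt]
    rw [TIaux.Phi_comb] at hz
    rw [TIaux.Phi_axl n hn i k₁ m' hi hk₁ hm', TIaux.Phi_axl n hn i k₂ m' hi hk₂ hm',
      TIaux.Phi_axl n hn i k₃ m' hi hk₃ hm'] at hz
    exact hz
  have hne1 : TIaux.mIdx n k₁ ≠ TIaux.mIdx n i := fun h => by
    rcases TIaux.mIdx_inj n k₁ i hk₁ hi h with h' | h'
    exacts [h₁i h', h₁ib h']
  have hne2 : TIaux.mIdx n k₂ ≠ TIaux.mIdx n i := fun h => by
    rcases TIaux.mIdx_inj n k₂ i hk₂ hi h with h' | h'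
    exacts [h₂i h', h₂ib h']
  have hne3 : TIaux.mIdx n k₃ ≠ TIaux.mIdx n i := fun h => by
    rcases TIaux.mIdx_inj n k₃ i hk₃ hi h with h' | h'
    exacts [h₃i h', h₃ib h']
  have hsum : g 0 + g 1 + g 2 = 0 := by
    have Ei := eqn (TIaux.mIdx n i) (TIaux.mIdx_le n i hi)
    rw [TIaux.G_ne n k₁ _ (Ne.symm hne1), TIaux.G_ne n k₂ _ (Ne.symm hne2),
      TIaux.G_ne n k₃ _ (Ne.symm hne3), TIaux.G_self n i _ rfl] at Ei
    rcases TIaux.sgn_cases n i with h | h <;> rw [h] at Ei <;> linarith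
  have key : g 0 = 0 ∧ g 1 = 0 ∧ g 2 = 0 := by
    have E1 := eqn (TIaux.mIdx n k₁) (TIaux.mIdx_le n k₁ hk₁)
    have E2 := eqn (TIaux.mIdx n k₂) (TIaux.mIdx_le n k₂ hk₂)
    have E3 := eqn (TIaux.mIdx n k₃) (TIaux.mIdx_le n k₃ hk₃)
    rw [TIaux.G_ne n i _ hne1, TIaux.G_self n k₁ _ rfl] at E1
    rw [TIaux.G_ne n i _ hne2, TIaux.G_self n k₂ _ rfl] at E2
    rw [TIaux.G_ne n i _ hne3, TIaux.G_self n k₃ _ rfl] at E3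
    by_cases e12 : TIaux.mIdx n k₁ = TIaux.mIdx n k₂
    · have hb : k₂ = bar n k₁ := by
        rcases TIaux.mIdx_inj n k₂ k₁ hk₂ hk₁ e12.symm with h' | h'
        exacts [absurd h'.symm h12, h']
      have hs2 : TIaux.sgn n k₂ = - TIaux.sgn n k₁ := by
        rw [hb]; exact TIaux.sgn_bar n k₁ hn hk₁
      have e13 : TIaux.mIdx n k₁ ≠ TIaux.mIdx n k₃ := by
        intro h
        rcases TIaux.mIdx_inj n k₃ k₁ hk₃ hk₁ h.symm with h' | h'
        exacts [h13 h'.symm, h23 (hb.trans h'.symm)]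
      have e23 : TIaux.mIdx n k₂ ≠ TIaux.mIdx n k₃ := fun h => e13 (e12.trans h)
      rw [TIaux.G_ne n k₁ _ (Ne.symm e13), TIaux.G_ne n k₂ _ (Ne.symm e23)] at E3
      have hg2 : g 2 = 0 := by
        rcases TIaux.sgn_cases n k₃ with h | h <;> rw [h] at E3 <;> linarith
      rw [TIaux.G_self n k₂ _ e12, TIaux.G_ne n k₃ _ e13, hs2] at E1
      have hg01 : g 0 = g 1 := by
        rcases TIaux.sgn_cases n k₁ with h | h <;> rw [h] at E1 <;> linarith
      exact ⟨by linarith, by linarith, hg2⟩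
    · by_cases e13 : TIaux.mIdx n k₁ = TIaux.mIdx n k₃
      · have hb : k₃ = bar n k₁ := by
          rcases TIaux.mIdx_inj n k₃ k₁ hk₃ hk₁ e13.symm with h' | h'
          exacts [absurd h'.symm h13, h']
        have hs3 : TIaux.sgn n k₃ = - TIaux.sgn n k₁ := by
          rw [hb]; exact TIaux.sgn_bar n k₁ hn hk₁
        have e23 : TIaux.mIdx n k₂ ≠ TIaux.mIdx n k₃ := fun h => e12 (e13.trans h.symm)
        rw [TIaux.G_ne n k₁ _ (Ne.symm e12), TIaux.G_ne n k₃ _ e23] at E2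
        have hg1 : g 1 = 0 := by
          rcases TIaux.sgn_cases n k₂ with h | h <;> rw [h] at E2 <;> linarith
        rw [TIaux.G_ne n k₂ _ e12, TIaux.G_self n k₃ _ e13, hs3] at E1
        have hg02 : g 0 = g 2 := by
          rcases TIaux.sgn_cases n k₁ with h | h <;> rw [h] at E1 <;> linarith
        exact ⟨by linarith, hg1, by linarith⟩
      · by_cases e23 : TIaux.mIdx n k₂ = TIaux.mIdx n k₃
        · have hb : k₃ = bar n k₂ := by
            rcases TIaux.mIdx_inj n k₃ k₂ hk₃ hk₂ e23.symm with h' | h'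
            exacts [absurd h'.symm h23, h']
          have hs3 : TIaux.sgn n k₃ = - TIaux.sgn n k₂ := by
            rw [hb]; exact TIaux.sgn_bar n k₂ hn hk₂
          rw [TIaux.G_ne n k₂ _ e12, TIaux.G_ne n k₃ _ e13] at E1
          have hg0 : g 0 = 0 := by
            rcases TIaux.sgn_cases n k₁ with h | h <;> rw [h] at E1 <;> linarith
          rw [TIaux.G_ne n k₁ _ (Ne.symm e12), TIaux.G_self n k₃ _ e23, hs3] at E2
          have hg12 : g 1 = g 2 := by
            rcases TIaux.sgn_cases n k₂ with h | h <;> rw [h] at E2 <;> linarith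
          exact ⟨hg0, by linarith, by linarith⟩
        · rw [TIaux.G_ne n k₂ _ e12, TIaux.G_ne n k₃ _ e13] at E1
          rw [TIaux.G_ne n k₁ _ (Ne.symm e12), TIaux.G_ne n k₃ _ e23] at E2
          rw [TIaux.G_ne n k₁ _ (Ne.symm e13), TIaux.G_ne n k₂ _ (Ne.symm e23)] at E3
          refine ⟨?_, ?_, ?_⟩
          · rcases TIaux.sgn_cases n k₁ with h | h <;> rw [h] at E1 <;> linarith
          · rcases TIaux.sgn_cases n k₂ with h | h <;> rw [h] at E2 <;> linarith
          · rcases TIaux.sgn_cases n k₃ with h | h <;> rw [h] at E3 <;> linarith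
  intro r
  fin_cases r
  · exact key.1
  · exact key.2.1
  · exact key.2.2
end
end

section
/- For every i ∈ V, the set {α(i,j) : j ∈ V, j ≠ i, j ≠ ī} generates ℤ^{n+1} as an abelian group; that is, the axial function α is effective. -/
noncomputable section

private lemma hh_small {n j : ℕ} (h : j ≤ n+2) : hh n j = ee n (j-1) - ee n (n+1) :=
  if_pos h

private lemma hh_big {n j : ℕ} (h : ¬ j ≤ n+2) : hh n j = ee n n - ee n (2*n+2-j) :=
  if_neg h

set_option maxHeartbeats 1000000 in
/-- The axial function `α` is effective: for every `i ∈ V`, the set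
`{α(i,j) : j ∈ V, j ≠ i, j ≠ ī}` generates `ℤ^{n+1}` as an abelian group. -/
theorem axial_effective (n : ℕ) (hn : 1 ≤ n) (i : ℕ) (hi : memV n i) :
    Submodule.span ℤ {w : Fin (n+1) → ℤ |
      ∃ j : ℕ, memV n j ∧ j ≠ i ∧ j ≠ bar n i ∧ w = axl n i j} = ⊤ := by
  obtain ⟨hi1, hi2⟩ := hi
  set S : Set (Fin (n+1) → ℤ) :=
    {w : Fin (n+1) → ℤ | ∃ j : ℕ, memV n j ∧ j ≠ i ∧ j ≠ bar n i ∧ w = axl n i j} with hS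
  have hA : ∀ j, 1 ≤ j → j ≤ 2*n+2 → j ≠ i → j ≠ bar n i →
      hh n j - hh n i ∈ Submodule.span ℤ S := fun j h1 h2 h3 h4 =>
    Submodule.subset_span ⟨j, ⟨h1, h2⟩, h3, h4, rfl⟩
  have hbar : bar n i = 2*n+3 - i := rfl
  have key : ∀ k, 1 ≤ k → k ≤ n+1 → ee n k ∈ Submodule.span ℤ S := by
    intro k hk1 hk2
    rcases le_or_gt i (n+2) with hsm | hsm
    · -- hh n i = ee n (i-1) - ee n (n+1)
      rcases eq_or_ne i 1 with h1 | h1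
      · -- i = 1 : e_k = A(k+1)
        have hv : ee n k = hh n (k+1) - hh n i := by
          rw [hh_small (show k+1 ≤ n+2 by omega), hh_small (show i ≤ n+2 by omega)]
          funext t; have ht : (t:ℕ) < n+1 := t.isLt
          simp only [ee, Pi.sub_apply]
          split_ifs <;> first | exact absurd ‹False› not_false | omega
        rw [hv]
        exact hA (k+1) (by omega) (by omega) (by omega) (by omega)
      rcases le_or_gt i n with h3 | h3
      · -- 2 ≤ i ≤ n
        rcases eq_or_ne k (i-1) with hk | hk
        · have hv : ee n k = -(hh n 1 - hh n i) := by
            rw [hh_small (show (1:ℕ) ≤ n+2 by omega), hh_small (show i ≤ n+2 by omega)]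
            funext t; have ht : (t:ℕ) < n+1 := t.isLt
            simp only [ee, Pi.sub_apply, Pi.neg_apply]
            split_ifs <;> first | exact absurd ‹False› not_false | omega
          rw [hv]
          exact neg_mem (hA 1 (by omega) (by omega) (by omega) (by omega))
        · have hv : ee n k = (hh n (k+1) - hh n i) - (hh n 1 - hh n i) := by
            rw [hh_small (show k+1 ≤ n+2 by omega), hh_small (show (1:ℕ) ≤ n+2 by omega),
              hh_small (show i ≤ n+2 by omega)]
            funext t; have ht : (t:ℕ) < n+1 := t.isLt
            simp only [ee, Pi.sub_apply]
            split_ifs <;> first | exact absurd ‹False› not_false | omega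
          rw [hv]
          exact sub_mem (hA (k+1) (by omega) (by omega) (by omega) (by omega))
            (hA 1 (by omega) (by omega) (by omega) (by omega))
      · -- i = n+1 or i = n+2
        rcases le_or_gt k (n-1) with hk | hk
        · have hv : ee n k = (hh n (k+1) - hh n i) - (hh n 1 - hh n i) := by
            rw [hh_small (show k+1 ≤ n+2 by omega), hh_small (show (1:ℕ) ≤ n+2 by omega),
              hh_small (show i ≤ n+2 by omega)]
            funext t; have ht : (t:ℕ) < n+1 := t.isLt
            simp only [ee, Pi.sub_apply]
            split_ifs <;> first | exact absurd ‹False› not_false | omega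
          rw [hv]
          exact sub_mem (hA (k+1) (by omega) (by omega) (by omega) (by omega))
            (hA 1 (by omega) (by omega) (by omega) (by omega))
        rcases eq_or_ne k (2*n+2-i) with hk6 | hk6
        · -- i = n+1, k = n+1 or i = n+2, k = n : e_k = A(2n+2)
          have hv : ee n k = hh n (2*n+2) - hh n i := by
            rw [hh_big (show ¬(2*n+2 ≤ n+2) by omega), hh_small (show i ≤ n+2 by omega)]
            funext t; have ht : (t:ℕ) < n+1 := t.isLt
            simp only [ee, Pi.sub_apply]
            split_ifs <;> first | exact absurd ‹False› not_false | omega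
          rw [hv]
          exact hA (2*n+2) (by omega) (by omega) (by omega) (by omega)
        · -- the other of {n, n+1} : e_k = -A(1)
          have hv : ee n k = -(hh n 1 - hh n i) := by
            rw [hh_small (show (1:ℕ) ≤ n+2 by omega), hh_small (show i ≤ n+2 by omega)]
            funext t; have ht : (t:ℕ) < n+1 := t.isLt
            simp only [ee, Pi.sub_apply, Pi.neg_apply]
            split_ifs <;> first | exact absurd ‹False› not_false | omega
          rw [hv]
          exact neg_mem (hA 1 (by omega) (by omega) (by omega) (by omega))
    · -- i ≥ n+3 : hh n i = ee n n - ee n (2n+2-i)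
      rcases eq_or_ne i (2*n+2) with h2 | h2
      · -- i = 2n+2 : e_k = A(k+1) - A(n+1) - A(n+2)
        have hv : ee n k = (hh n (k+1) - hh n i) - (hh n (n+1) - hh n i)
            - (hh n (n+2) - hh n i) := by
          rw [hh_small (show k+1 ≤ n+2 by omega), hh_small (show n+1 ≤ n+2 by omega),
            hh_small (show n+2 ≤ n+2 by omega), hh_big (show ¬(i ≤ n+2) by omega)]
          funext t; have ht : (t:ℕ) < n+1 := t.isLt
          simp only [ee, Pi.sub_apply]
          split_ifs <;> first | exact absurd ‹False› not_false | omega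
        rw [hv]
        exact sub_mem (sub_mem (hA (k+1) (by omega) (by omega) (by omega) (by omega))
          (hA (n+1) (by omega) (by omega) (by omega) (by omega)))
          (hA (n+2) (by omega) (by omega) (by omega) (by omega))
      rcases eq_or_ne k (2*n+2-i) with hk | hk
      · have hv : ee n k = (hh n (n+1) - hh n i) + (hh n (n+2) - hh n i)
            - (hh n 1 - hh n i) := by
          rw [hh_small (show n+1 ≤ n+2 by omega), hh_small (show n+2 ≤ n+2 by omega),
            hh_small (show (1:ℕ) ≤ n+2 by omega), hh_big (show ¬(i ≤ n+2) by omega)]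
          funext t; have ht : (t:ℕ) < n+1 := t.isLt
          simp only [ee, Pi.sub_apply, Pi.add_apply]
          split_ifs <;> first | exact absurd ‹False› not_false | omega
        rw [hv]
        exact sub_mem (add_mem (hA (n+1) (by omega) (by omega) (by omega) (by omega))
          (hA (n+2) (by omega) (by omega) (by omega) (by omega)))
          (hA 1 (by omega) (by omega) (by omega) (by omega))
      · have hv : ee n k = (hh n (k+1) - hh n i) - (hh n 1 - hh n i) := by
          rw [hh_small (show k+1 ≤ n+2 by omega), hh_small (show (1:ℕ) ≤ n+2 by omega),
            hh_big (show ¬(i ≤ n+2) by omega)]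
          funext t; have ht : (t:ℕ) < n+1 := t.isLt
          simp only [ee, Pi.sub_apply]
          split_ifs <;> first | exact absurd ‹False› not_false | omega
        rw [hv]
        exact sub_mem (hA (k+1) (by omega) (by omega) (by omega) (by omega))
          (hA 1 (by omega) (by omega) (by omega) (by omega))
  rw [eq_top_iff]
  intro v _
  rw [pi_eq_sum_univ v]
  refine Submodule.sum_mem _ fun t _ => Submodule.smul_mem _ _ ?_
  have h : (fun j => if t = j then (1:ℤ) else 0) = ee n (↑t + 1) := by
    funext s
    simp only [ee, add_left_inj]
    rcases eq_or_ne t s with h | h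
    · simp [h]
    · rw [if_neg h, if_neg (by simpa [Fin.ext_iff] using h.symm)]
  rw [h]
  exact key (↑t+1) (by omega) (by omega)
end
end

section
/- For every v ∈ V, the function M_v : V → R is a K-class, i.e., for every edge (i,j) ∈ E the element 1 − e^{α(i,j)} divides M_v(i) − M_v(j) in R. -/
noncomputable section

/-- `h(v) + h(v̄) = e_n - e_{n+1}` for `v ∈ V`. -/
lemma hbar_add (n v : ℕ) (hv : memV n v) :
    hh n v + hh n (bar n v) = ee n n - ee n (n+1) := by
  obtain ⟨h1, h2⟩ := hv
  funext t
  have ht := t.isLt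
  simp only [bar]; simp only [hh, Pi.add_apply, Pi.sub_apply, ite_apply]
  split_ifs <;> simp only [ee, Pi.add_apply, Pi.sub_apply] <;> split_ifs <;> omega

lemma ex_mul (n : ℕ) (a b : Fin (n+1) → ℤ) : ex n a * ex n b = ex n (a + b) := by
  simp [ex, AddMonoidAlgebra.single_mul_single]

lemma Mv_eq (n v : ℕ) (hv : memV n v) (l : ℕ) :
    Mv n v l = ex n (hh n v - hh n l) := by
  unfold Mv
  split_ifs with h1 h2
  · subst h1; rw [sub_self]; rw [ex]; exact AddMonoidAlgebra.one_def
  · subst h2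
    congr 1
    have := hbar_add n v hv
    rw [show hh n v = ee n n - ee n (n+1) - hh n (bar n v) by rw [← this]; abel]
    rw [two_smul]; abel
  · rfl

/-- For every `v ∈ V`, the function `M_v : V → R` is a K-class. -/
theorem Mv_isKClass (n : ℕ) (hn : 1 ≤ n) (v : ℕ) (hv : memV n v) :
    isKClass n (Mv n v) := by
  intro i j hi hj hji hjbar
  rw [Mv_eq n v hv, Mv_eq n v hv]
  refine ⟨-(ex n (hh n v - hh n j)), ?_⟩
  rw [sub_mul, one_mul, mul_neg, ex_mul]
  rw [show axl n i j + (hh n v - hh n j) = hh n v - hh n i by unfold axl; abel]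
  ring
end
end

section
/- For every i with 1 ≤ i ≤ n+1, the pointwise product M_{i+1} · M_1⁻¹ is the constant function on V with value y_i = e^{e_i}; that is, M_{i+1}(j) · (M_1(j))⁻¹ = y_i in R for all j ∈ V. -/
noncomputable section

set_option maxHeartbeats 16000000 in
/-- For `1 ≤ i ≤ n+1`, the pointwise product `M_{i+1} · M_1⁻¹` is the
constant function on `V` with value `y_i = e^{e_i}`. -/
theorem Mv_mul_MvInv_one (n : ℕ) (hn : 1 ≤ n) (i : ℕ) (hi1 : 1 ≤ i) (hi2 : i ≤ n+1)
    (j : ℕ) (hj : memV n j) :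
    Mv n (i+1) j * MvInv n 1 j = ex n (ee n i) := by
  obtain ⟨hj1, hj2⟩ := hj
  have key : ∀ a b : Fin (n+1) → ℤ, ex n a * ex n b = ex n (a + b) := by
    intro a b
    simp [ex, AddMonoidAlgebra.single_mul_single]
  have one_ex : (1 : Rg n) = ex n 0 := rfl
  have exeq : ∀ a b : Fin (n+1) → ℤ, a = b → ex n a = ex n b := fun a b h => by rw [h]
  unfold Mv MvInv bar
  split_ifs
  all_goals try omega
  all_goals (
    simp only [one_ex, key, one_mul, mul_one]
    apply exeq
    funext t
    simp only [hh, ee, Pi.add_apply, Pi.sub_apply, Pi.neg_apply, Pi.smul_apply,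
      Pi.zero_apply, smul_eq_mul]
    split_ifs <;> simp only [ee, Pi.sub_apply] <;> split_ifs <;>
      first | contradiction | omega)
end
end

section
/- For every admissible subset P ⊆ V, the function Δ_P : V → R is a K-class, i.e., for every edge (i,j) ∈ E the element 1 − e^{α(i,j)} divides Δ_P(i) − Δ_P(j) in R. -/
noncomputable section

lemma ex_add (n : ℕ) (a b : Fin (n+1) → ℤ) : ex n (a + b) = ex n a * ex n b := by
  simp [ex, AddMonoidAlgebra.single_mul_single]

lemma ex_zero (n : ℕ) : ex n 0 = 1 := rfl

lemma ex_mul_ex_neg (n : ℕ) (a : Fin (n+1) → ℤ) : ex n a * ex n (-a) = 1 := by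
  rw [← ex_add, add_neg_cancel, ex_zero]

lemma sub_ex_dvd (n : ℕ) (a : Fin (n+1) → ℤ) : (1 - ex n a) ∣ (1 - ex n (-a)) := by
  refine ⟨-ex n (-a), ?_⟩
  linear_combination - ex_mul_ex_neg n a

lemma prod_sub_dvd {R : Type*} [CommRing R] {ι : Type*} [DecidableEq ι] (s : Finset ι)
    (f g : ι → R) (d : R) (h : ∀ k ∈ s, d ∣ f k - g k) :
    d ∣ s.prod f - s.prod g := by
  induction s using Finset.induction_on with
  | empty => simp
  | @insert a s ha ih =>
    rw [Finset.prod_insert ha, Finset.prod_insert ha]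
    have h1 := h a (Finset.mem_insert_self a s)
    have h2 := ih (fun k hk => h k (Finset.mem_insert_of_mem hk))
    have key : f a * s.prod f - g a * s.prod g
        = f a * (s.prod f - s.prod g) + (f a - g a) * s.prod g := by ring
    rw [key]
    exact dvd_add (h2.mul_left _) (h1.mul_right _)

lemma bar_bar {n i : ℕ} (h : memV n i) : bar n (bar n i) = i := by
  unfold memV at h; unfold bar; omega

lemma memV_bar {n i : ℕ} (h : memV n i) : memV n (bar n i) := by
  unfold memV at *; unfold bar; omega

lemma hsum (n k : ℕ) (hk : memV n k) :
    hh n k + hh n (bar n k) = ee n n - ee n (n+1) := by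
  obtain ⟨h1, h2⟩ := hk
  unfold hh bar
  split_ifs with hA hB hB
  · have hk' : k = n+1 ∨ k = n+2 := by omega
    rcases hk' with rfl | rfl
    · have e1 : n+1-1 = n := by omega
      have e2 : 2*n+3-(n+1)-1 = n+1 := by omega
      rw [e1, e2]; ring
    · have e1 : n+2-1 = n+1 := by omega
      have e2 : 2*n+3-(n+2)-1 = n := by omega
      rw [e1, e2]; ring
  · have e1 : 2*n+2-(2*n+3-k) = k-1 := by omega
    rw [e1]; ring
  · have e1 : 2*n+3-k-1 = 2*n+2-k := by omega
    rw [e1]; ring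
  · omega

lemma axl_bar (n i j : ℕ) (hi : memV n i) (hj : memV n j) :
    axl n i (bar n j) = axl n j (bar n i) := by
  have h1 := hsum n i hi
  have h2 := hsum n j hj
  unfold axl
  linear_combination h2 - h1

lemma axl_add (n i j k : ℕ) : axl n j k + axl n i j = axl n i k := by
  unfold axl; abel

lemma axl_neg (n i j : ℕ) : axl n j i = -(axl n i j) := by
  unfold axl; abel

/-- For every admissible `P ⊆ V`, the function `Δ_P : V → R` is a K-class. -/
theorem Dl_isKClass (n : ℕ) (hn : 1 ≤ n) (P : Finset ℕ) (hP : admissible n P) :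
    isKClass n (Dl n P) := by
  obtain ⟨-, hPV, hPbar⟩ := hP
  intro i j hi hj hji hjbar
  by_cases hiP : i ∈ P <;> by_cases hjP : j ∈ P
  · -- both in P : main case
    simp only [Dl, if_pos hiP, if_pos hjP]
    have hbi : bar n i ∉ P := hPbar i hiP
    have hbj : bar n j ∉ P := hPbar j hjP
    have hbiV := memV_bar hi
    have hbjV := memV_bar hj
    have hbji : bar n j ≠ bar n i := fun h => hji (by rw [← bar_bar hj, h, bar_bar hi])
    have hbij : bar n i ≠ bar n j := fun h => hbji h.symm
    set T : Finset ℕ :=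
      (Vfin n).filter (fun k => k ∉ P ∧ k ≠ bar n i ∧ k ≠ bar n j) with hT
    have hTi : (Vfin n).filter (fun k => k ∉ P ∧ k ≠ bar n i)
        = insert (bar n j) T := by
      ext k
      simp only [hT, Finset.mem_filter, Finset.mem_insert, Vfin, Finset.mem_Icc]
      constructor
      · rintro ⟨hk1, hk2, hk3⟩
        by_cases h : k = bar n j
        · exact Or.inl h
        · exact Or.inr ⟨hk1, hk2, hk3, h⟩
      · rintro (rfl | ⟨hk1, hk2, hk3, -⟩)
        · exact ⟨⟨hbjV.1, hbjV.2⟩, hbj, hbji⟩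
        · exact ⟨hk1, hk2, hk3⟩
    have hTj : (Vfin n).filter (fun k => k ∉ P ∧ k ≠ bar n j)
        = insert (bar n i) T := by
      ext k
      simp only [hT, Finset.mem_filter, Finset.mem_insert, Vfin, Finset.mem_Icc]
      constructor
      · rintro ⟨hk1, hk2, hk3⟩
        by_cases h : k = bar n i
        · exact Or.inl h
        · exact Or.inr ⟨hk1, hk2, h, hk3⟩
      · rintro (rfl | ⟨hk1, hk2, -, hk3⟩)
        · exact ⟨⟨hbiV.1, hbiV.2⟩, hbi, hbij⟩
        · exact ⟨hk1, hk2, hk3⟩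
    have hnmem_j : bar n j ∉ T := by
      simp only [hT, Finset.mem_filter]
      rintro ⟨-, -, -, h⟩; exact h rfl
    have hnmem_i : bar n i ∉ T := by
      simp only [hT, Finset.mem_filter]
      rintro ⟨-, -, h, -⟩; exact h rfl
    rw [hTi, hTj, Finset.prod_insert hnmem_j, Finset.prod_insert hnmem_i,
      axl_bar n i j hi hj, ← mul_sub]
    refine Dvd.dvd.mul_left ?_ _
    apply prod_sub_dvd
    intro k hk
    refine ⟨ex n (axl n j k), ?_⟩
    have h1 : ex n (axl n j k) * ex n (axl n i j) = ex n (axl n i k) := by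
      rw [← ex_add, axl_add]
    linear_combination h1
  · -- i ∈ P, j ∉ P
    simp only [Dl, if_pos hiP, if_neg hjP, sub_zero]
    apply Finset.dvd_prod_of_mem
    simp only [Finset.mem_filter, Vfin, Finset.mem_Icc]
    exact ⟨⟨hj.1, hj.2⟩, hjP, hjbar⟩
  · -- i ∉ P, j ∈ P
    simp only [Dl, if_neg hiP, if_pos hjP, zero_sub, dvd_neg]
    have hib : i ≠ bar n j := fun h => hjbar (by rw [h, bar_bar hj])
    have hfac : (1 - ex n (axl n j i)) ∣
        ∏ k ∈ (Vfin n).filter (fun k => k ∉ P ∧ k ≠ bar n j),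
          (1 - ex n (axl n j k)) := by
      apply Finset.dvd_prod_of_mem
      simp only [Finset.mem_filter, Vfin, Finset.mem_Icc]
      exact ⟨⟨hi.1, hi.2⟩, hiP, hib⟩
    refine dvd_trans ?_ hfac
    rw [axl_neg n i j]
    exact sub_ex_dvd n (axl n i j)
  · -- neither in P
    simp [Dl, hiP, hjP]
end
end

section
/- (Relation 3) Let P ⊆ V be an admissible subset with |P| > 1 and let i ∈ P. Then, as functions V → R (operations pointwise), Δ_P · (1 − M_i) = Δ_{P∖{i}}. -/
noncomputable section

/-- Relation 3: for admissible `P ⊆ V` with `|P| > 1` and `i ∈ P`,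
one has `Δ_P · (1 - M_i) = Δ_{P∖{i}}` as functions `V → R`. -/
theorem relation3 (n : ℕ) (hn : 1 ≤ n) (P : Finset ℕ) (hP : admissible n P)
    (hcard : 1 < P.card) (i : ℕ) (hi : i ∈ P) :
    ∀ l, memV n l → Dl n P l * (1 - Mv n i l) = Dl n (P.erase i) l := by
  obtain ⟨hne, hV, hbar⟩ := hP
  intro l hl
  by_cases hlP : l ∈ P
  · by_cases hli : l = i
    · subst hli
      simp [Dl, Mv]
    · have hbari : bar n i ∉ P := hbar i hi
      have hlbar : l ≠ bar n i := fun h => hbari (h ▸ hlP)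
      have hibarl : i ≠ bar n l := fun h => hbar l hlP (h ▸ hi)
      have hiV : i ∈ Vfin n := by
        have := hV i hi
        simpa [Vfin, Finset.mem_Icc, memV] using this
      have hset : (Vfin n).filter (fun k => k ∉ P.erase i ∧ k ≠ bar n l)
          = insert i ((Vfin n).filter (fun k => k ∉ P ∧ k ≠ bar n l)) := by
        ext k
        simp only [Finset.mem_filter, Finset.mem_insert, Finset.mem_erase, not_and]
        constructor
        · rintro ⟨hkV, hk1, hk2⟩
          by_cases hki : k = i
          · exact Or.inl hki
          · exact Or.inr ⟨hkV, fun hkP => hk1 hki hkP, hk2⟩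
        · rintro (rfl | ⟨hkV, hk1, hk2⟩)
          · exact ⟨hiV, fun h => absurd rfl h, hibarl⟩
          · exact ⟨hkV, fun _ h => hk1 h, hk2⟩
      have hinotin : i ∉ (Vfin n).filter (fun k => k ∉ P ∧ k ≠ bar n l) := by
        simp [Finset.mem_filter, hi]
      have hMv : Mv n i l = ex n (axl n l i) := by
        simp [Mv, hli, hlbar, axl]
      rw [Dl, Dl, if_pos hlP, if_pos (Finset.mem_erase.mpr ⟨hli, hlP⟩), hset,
        Finset.prod_insert hinotin, hMv]
      ring
  · have : l ∉ P.erase i := fun h => hlP (Finset.mem_erase.mp h).2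
    simp [Dl, hlP, this]
end
end

section
/- If c₀, c₁, …, c_n ∈ R and d₂, d₃, …, d_{n+2} ∈ R satisfy Σ_{m=0}^{n} c_m · ∏_{i=1}^{m}(1 − M_i) + Σ_{j=2}^{n+2} d_j · Δ_{{n+j, n+j+1, …, 2n+2}} = 0 as a function V → R (elements of R acting as constant functions, operations pointwise, the empty product being the constant function 1), then c₀ = c₁ = ⋯ = c_n = 0 and d₂ = d₃ = ⋯ = d_{n+2} = 0. -/
noncomputable section

lemma one_sub_ex_ne (n : ℕ) {w : Fin (n+1) → ℤ} (hw : w ≠ 0) : (1 : Rg n) - ex n w ≠ 0 := by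
  intro h
  have h1 : (1 : Rg n) = ex n w := by
    have := sub_eq_zero.mp h
    exact this
  rw [ex, AddMonoidAlgebra.one_def] at h1
  exact hw (AddMonoidAlgebra.single_left_injective (R := ℤ) one_ne_zero h1).symm

lemma ee_inj (n : ℕ) {a b : ℕ} (ha : a ≤ n+1) (hb : b ≤ n+1) (h : ee n a = ee n b) : a = b := by
  by_contra hne
  rcases Nat.eq_zero_or_pos a with h0 | h1
  · have hb1 : 1 ≤ b := by omega
    have := congrFun h ⟨b-1, by omega⟩
    simp only [ee] at this
    rw [if_neg (by omega), if_pos (by omega)] at this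
    norm_num at this
  · have := congrFun h ⟨a-1, by omega⟩
    simp only [ee] at this
    rw [if_pos (by omega), if_neg (by omega)] at this
    norm_num at this

lemma hh_mixed (n : ℕ) (hn : 1 ≤ n) {j k : ℕ} (hj1 : 1 ≤ j) (hj : j ≤ n+2)
    (hk1 : n+3 ≤ k) (hk : k ≤ 2*n+2) : hh n j ≠ hh n k := by
  intro h
  rw [hh, if_pos hj, hh, if_neg (by omega)] at h
  have h1 := congrFun h ⟨n, by omega⟩
  simp only [Pi.sub_apply, ee] at h1
  have h2 := congrFun h ⟨n-1, by omega⟩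
  simp only [Pi.sub_apply, ee] at h2
  split_ifs at h1 h2 <;> omega

lemma hh_inj (n : ℕ) (hn : 1 ≤ n) {j k : ℕ} (hj : memV n j) (hk : memV n k)
    (h : hh n j = hh n k) : j = k := by
  obtain ⟨hj1, hj2⟩ := hj
  obtain ⟨hk1, hk2⟩ := hk
  by_cases cj : j ≤ n+2 <;> by_cases ck : k ≤ n+2
  · rw [hh, if_pos cj, hh, if_pos ck] at h
    have := sub_left_injective h
    have := ee_inj n (by omega) (by omega) this
    omega
  · exact absurd h (hh_mixed n hn hj1 cj (by omega) hk2)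
  · exact absurd h.symm (hh_mixed n hn hk1 ck (by omega) hj2)
  · rw [hh, if_neg cj, hh, if_neg ck] at h
    have := sub_right_injective h
    have := ee_inj n (by omega) (by omega) this
    omega

lemma one_sub_ex_hh_ne (n : ℕ) (hn : 1 ≤ n) {j k : ℕ} (hj : memV n j) (hk : memV n k)
    (hne : j ≠ k) : (1 : Rg n) - ex n (hh n j - hh n k) ≠ 0 := by
  apply one_sub_ex_ne
  exact sub_ne_zero_of_ne (fun he => hne (hh_inj n hn hj hk he))

/-- the coefficients in a decomposition
`Σ_{m=0}^{n} c_m ∏_{i=1}^{m}(1-M_i) + Σ_{j=2}^{n+2} d_j Δ_{{n+j,…,2n+2}} = 0`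
(as a function `V → R`) all vanish. -/
theorem kclass_decomposition_unique (n : ℕ) (hn : 1 ≤ n) (c d : ℕ → Rg n)
    (h : ∀ l, memV n l →
      (∑ m ∈ Finset.range (n+1), c m * ∏ i ∈ Finset.Icc 1 m, (1 - Mv n i l))
        + ∑ j ∈ Finset.Icc 2 (n+2), d j * Dl n (Finset.Icc (n+j) (2*n+2)) l = 0) :
    (∀ m, m ≤ n → c m = 0) ∧ (∀ j, 2 ≤ j → j ≤ n+2 → d j = 0) := by
  classical
  have hc : ∀ m, m ≤ n → c m = 0 := by
    intro m
    induction m using Nat.strong_induction_on with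
    | _ m ih =>
      intro hm
      have hlV : memV n (m+1) := ⟨by omega, by omega⟩
      have heq := h (m+1) hlV
      have hd0 : ∀ j ∈ Finset.Icc 2 (n+2),
          d j * Dl n (Finset.Icc (n+j) (2*n+2)) (m+1) = 0 := by
        intro j hj
        rw [Finset.mem_Icc] at hj
        have hnm : (m+1) ∉ Finset.Icc (n+j) (2*n+2) := by
          rw [Finset.mem_Icc]; omega
        rw [Dl, if_neg hnm, mul_zero]
      rw [Finset.sum_eq_zero hd0, add_zero] at heq
      have hsum : (∑ m'' ∈ Finset.range (n+1),
          c m'' * ∏ i ∈ Finset.Icc 1 m'', (1 - Mv n i (m+1)))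
            = c m * ∏ i ∈ Finset.Icc 1 m, (1 - Mv n i (m+1)) := by
        apply Finset.sum_eq_single_of_mem m (Finset.mem_range.mpr (by omega))
        intro b hb hbm
        rw [Finset.mem_range] at hb
        rcases lt_or_gt_of_ne hbm with hlt | hgt
        · rw [ih b hlt (by omega), zero_mul]
        · have hz : (1 : Rg n) - Mv n (m+1) (m+1) = 0 := by
            rw [Mv, if_pos rfl, sub_self]
          have hpz : (∏ i ∈ Finset.Icc 1 b, ((1 : Rg n) - Mv n i (m+1))) = 0 :=
            Finset.prod_eq_zero (Finset.mem_Icc.mpr ⟨by omega, by omega⟩) hz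
          rw [hpz, mul_zero]
      rw [hsum] at heq
      have hprod : (∏ i ∈ Finset.Icc 1 m, ((1 : Rg n) - Mv n i (m+1))) ≠ 0 := by
        rw [Finset.prod_ne_zero_iff]
        intro i hi
        rw [Finset.mem_Icc] at hi
        have h1 : Mv n i (m+1) = ex n (hh n i - hh n (m+1)) := by
          rw [Mv, if_neg (by omega), if_neg (by rw [bar]; omega)]
        rw [h1]
        exact one_sub_ex_hh_ne n hn ⟨by omega, by omega⟩ hlV (by omega)
      exact (mul_eq_zero.mp heq).resolve_right hprod
  refine ⟨hc, ?_⟩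
  intro j
  induction j using Nat.strong_induction_on with
  | _ j ih =>
    intro hj2 hjn
    have hlV : memV n (n+j) := ⟨by omega, by omega⟩
    have heq := h (n+j) hlV
    have hc0 : (∑ m ∈ Finset.range (n+1),
        c m * ∏ i ∈ Finset.Icc 1 m, (1 - Mv n i (n+j))) = 0 :=
      Finset.sum_eq_zero fun m hm => by
        rw [hc m (by rw [Finset.mem_range] at hm; omega), zero_mul]
    rw [hc0, zero_add] at heq
    have hsum : (∑ j' ∈ Finset.Icc 2 (n+2),
        d j' * Dl n (Finset.Icc (n+j') (2*n+2)) (n+j))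
          = d j * Dl n (Finset.Icc (n+j) (2*n+2)) (n+j) := by
      apply Finset.sum_eq_single_of_mem j (Finset.mem_Icc.mpr ⟨hj2, hjn⟩)
      intro b hb hbj
      rw [Finset.mem_Icc] at hb
      rcases lt_or_gt_of_ne hbj with hlt | hgt
      · rw [ih b hlt hb.1 hb.2, zero_mul]
      · have hnm : (n+j) ∉ Finset.Icc (n+b) (2*n+2) := by
          rw [Finset.mem_Icc]; omega
        rw [Dl, if_neg hnm, mul_zero]
    rw [hsum] at heq
    have hD : Dl n (Finset.Icc (n+j) (2*n+2)) (n+j) ≠ 0 := by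
      rw [Dl, if_pos (Finset.mem_Icc.mpr ⟨le_refl _, by omega⟩)]
      rw [Finset.prod_ne_zero_iff]
      intro k hk
      rw [Finset.mem_filter, Vfin, Finset.mem_Icc] at hk
      obtain ⟨⟨hk1, hk2⟩, hkP, hkbar⟩ := hk
      rw [Finset.mem_Icc] at hkP
      have hkne : k ≠ n+j := by omega
      rw [axl]
      exact one_sub_ex_hh_ne n hn ⟨hk1, hk2⟩ hlV hkne
    exact (mul_eq_zero.mp heq).resolve_right hD
end
end

section
/- The set K(𝒬_{2n}) of all K-classes is an R-submodule of the R-module of functions V → R (with R acting by constant functions and operations pointwise), and it is a free R-module of rank 2n+2 with basis the 2n+2 functions {∏_{i=1}^{m}(1 − M_i) : 0 ≤ m ≤ n} ∪ {Δ_{{n+j, n+j+1, …, 2n+2}} : 2 ≤ j ≤ n+2}, the empty product (m = 0) being the constant function 1. -/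
noncomputable section

/-- The vertex set `V = {1,…,2n+2}` as a type. -/
def Vt (n : ℕ) : Type := {i : ℕ // memV n i}

/-- `φ : V → R` is a K-class if `1 - e^{α(i,j)}` divides `φ(i) - φ(j)` for every edge. -/
def isKClassV (n : ℕ) (f : Vt n → Rg n) : Prop :=
  ∀ i j : Vt n, j.1 ≠ i.1 → j.1 ≠ bar n i.1 →
    (1 - ex n (axl n i.1 j.1)) ∣ (f i - f j)

namespace Aux
variable {n : ℕ}

lemma ex_add (a b : Fin (n+1) → ℤ) : ex n (a + b) = ex n a * ex n b := by
  simp [ex, AddMonoidAlgebra.single_mul_single]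

lemma ex_zero : ex n 0 = 1 := rfl

lemma ex_inj {a b : Fin (n+1) → ℤ} (h : ex n a = ex n b) : a = b :=
  AddMonoidAlgebra.single_left_injective (one_ne_zero : (1:ℤ) ≠ 0) h

lemma ex_mul_ex_neg (w : Fin (n+1) → ℤ) : ex n (-w) * ex n w = 1 := by
  rw [← ex_add]; simp [ex_zero]

lemma one_sub_ex_neg (w : Fin (n+1) → ℤ) :
    1 - ex n (-w) = -(ex n (-w)) * (1 - ex n w) := by
  linear_combination (-1 : Rg n) * ex_mul_ex_neg w

lemma dvd_one_sub_neg (w : Fin (n+1) → ℤ) : (1 - ex n w) ∣ (1 - ex n (-w)) :=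
  ⟨-(ex n (-w)), by rw [one_sub_ex_neg]; ring⟩

lemma dvd_one_sub_nsmul (w : Fin (n+1) → ℤ) (m : ℕ) :
    (1 - ex n w) ∣ (1 - ex n ((m : ℤ) • w)) := by
  induction m with
  | zero => simp [ex_zero]
  | succ m ih =>
      have h : ((m+1 : ℕ) : ℤ) • w = (m : ℤ) • w + w := by push_cast; rw [add_smul, one_smul]
      rw [h, ex_add]
      have : 1 - ex n ((m:ℤ) • w) * ex n w
          = (1 - ex n ((m:ℤ) • w)) + ex n ((m:ℤ) • w) * (1 - ex n w) := by ring
      rw [this]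
      exact dvd_add ih (Dvd.dvd.mul_left (dvd_refl _) _)

lemma dvd_one_sub_zsmul (w : Fin (n+1) → ℤ) (k : ℤ) :
    (1 - ex n w) ∣ (1 - ex n (k • w)) := by
  obtain ⟨m, rfl | rfl⟩ := Int.eq_nat_or_neg k
  · exact dvd_one_sub_nsmul w m
  · rw [neg_smul]
    exact (dvd_one_sub_nsmul w m).trans (dvd_one_sub_neg _)

/-- The projection hom killing the `a` component, when `a c = ±1`. -/
def proj (a : Fin (n+1) → ℤ) (c : Fin (n+1)) : (Fin (n+1) → ℤ) →+ (Fin (n+1) → ℤ) where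
  toFun x := x - (a c * x c) • a
  map_zero' := by simp
  map_add' x y := by funext t; simp [Pi.add_apply, Pi.sub_apply]; ring

lemma proj_self {a : Fin (n+1) → ℤ} {c : Fin (n+1)} (h : a c = 1 ∨ a c = -1) :
    proj a c a = 0 := by
  have h1 : a c * a c = 1 := by rcases h with h | h <;> rw [h] <;> ring
  funext t; simp [proj, h1]

lemma sub_proj (a : Fin (n+1) → ℤ) (c : Fin (n+1)) (g : Fin (n+1) → ℤ) :
    g - proj a c g = (a c * g c) • a := by
  funext t; simp [proj]

/-- The ring hom `R → R` induced by `proj`. -/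
def phi (a : Fin (n+1) → ℤ) (c : Fin (n+1)) : Rg n →+* Rg n :=
  AddMonoidAlgebra.mapDomainRingHom ℤ (proj a c)

lemma phi_ex (a : Fin (n+1) → ℤ) (c : Fin (n+1)) (g : Fin (n+1) → ℤ) :
    phi (n := n) a c (ex n g) = ex n (proj a c g) := by
  simp [phi, ex, AddMonoidAlgebra.mapDomainRingHom, Finsupp.mapDomain_single]

lemma dvd_sub_phi (a : Fin (n+1) → ℤ) (c : Fin (n+1)) (x : Rg n) :
    (1 - ex n a) ∣ (x - phi a c x) := by
  induction x using AddMonoidAlgebra.induction_on with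
  | of g =>
      have hof : (AddMonoidAlgebra.of ℤ (Fin (n+1) → ℤ)) (Multiplicative.ofAdd g) = ex n g := rfl
      rw [hof, phi_ex]
      have h1 : ex n g - ex n (proj a c g)
          = -(ex n (proj a c g)) * (1 - ex n (g - proj a c g)) := by
        have : ex n (proj a c g) * ex n (g - proj a c g) = ex n g := by
          rw [← ex_add]; congr 1; ring
        linear_combination -this
      rw [h1, sub_proj]
      exact Dvd.dvd.mul_left (dvd_one_sub_zsmul a _) _
  | add f g hf hg =>
      have : f + g - phi a c (f + g) = (f - phi a c f) + (g - phi a c g) := by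
        rw [map_add]; ring
      rw [this]; exact dvd_add hf hg
  | smul r f hf =>
      have : r • f - phi a c (r • f) = r • (f - phi a c f) := by
        rw [map_zsmul, smul_sub]
      rw [this, zsmul_eq_mul]
      exact Dvd.dvd.mul_left hf _

lemma phi_one_sub_ex {a : Fin (n+1) → ℤ} {c : Fin (n+1)} (h : a c = 1 ∨ a c = -1) :
    phi (n := n) a c (1 - ex n a) = 0 := by
  rw [map_sub, map_one, phi_ex, proj_self h, ex_zero, sub_self]

lemma one_sub_ex_ne_zero {a : Fin (n+1) → ℤ} (h : a ≠ 0) : (1 - ex n a) ≠ 0 := by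
  intro hc
  exact h (ex_inj (((sub_eq_zero.mp hc).symm).trans ex_zero.symm))

lemma prime_one_sub_ex {a : Fin (n+1) → ℤ} {c : Fin (n+1)} (h : a c = 1 ∨ a c = -1) :
    Prime (1 - ex n a) := by
  constructor
  · apply one_sub_ex_ne_zero
    intro hc; rcases h with h|h <;> rw [hc] at h <;> simp at h
  constructor
  · intro hu
    have := (hu.map (phi (n := n) a c))
    rw [phi_one_sub_ex h] at this
    exact not_isUnit_zero this
  · intro x y hxy
    obtain ⟨z, hz⟩ := hxy
    have h0 : phi (n := n) a c x * phi a c y = 0 := by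
      rw [← map_mul, hz, map_mul, phi_one_sub_ex h, zero_mul]
    rcases mul_eq_zero.mp h0 with h1 | h1
    · left
      have := dvd_sub_phi a c x
      rwa [h1, sub_zero] at this
    · right
      have := dvd_sub_phi a c y
      rwa [h1, sub_zero] at this


lemma eq_smul_of_proj_eq_zero {a b : Fin (n+1) → ℤ} {c : Fin (n+1)}
    (h : proj a c b = 0) : b = (a c * b c) • a := by
  have := sub_proj a c b
  rw [h, sub_zero] at this
  exact this

lemma not_dvd_one_sub {a b : Fin (n+1) → ℤ} {c c' : Fin (n+1)}
    (ha : a c = 1 ∨ a c = -1) (hb : b c' = 1 ∨ b c' = -1)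
    (hne : b ≠ a) (hne' : b ≠ -a) : ¬ (1 - ex n a) ∣ (1 - ex n b) := by
  intro hd
  obtain ⟨z, hz⟩ := hd
  have h0 : (1 : Rg n) - ex n (proj a c b) = 0 := by
    have := congrArg (phi (n := n) a c) hz
    rw [map_sub, map_one, phi_ex, map_mul, phi_one_sub_ex ha, zero_mul] at this
    exact this
  have hp : proj a c b = 0 :=
    ex_inj (((sub_eq_zero.mp h0).symm).trans ex_zero.symm)
  have hb' : b = (a c * b c) • a := eq_smul_of_proj_eq_zero hp
  set k := a c * b c with hk
  have hbc' : b c' = k * a c' := by rw [hb']; simp [mul_comm]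
  have hu : IsUnit k := by
    rcases hb with h | h
    · exact IsUnit.of_mul_eq_one _ (hbc'.symm.trans h)
    · exact IsUnit.of_mul_eq_one (a := k) (-(a c')) (by rw [mul_neg, ← hbc', h]; ring)
  have hk1 : k = 1 ∨ k = -1 := Int.isUnit_iff.mp hu
  rcases hk1 with h | h
  · exact hne (by rw [hb', h, one_smul])
  · exact hne' (by rw [hb', h, neg_smul, one_smul])

lemma prod_primes_dvd (s : Finset ℕ) (p : ℕ → Rg n) (x : Rg n)
    (hp : ∀ i ∈ s, Prime (p i))
    (hnd : ∀ i ∈ s, ∀ j ∈ s, i ≠ j → ¬ p i ∣ p j)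
    (hd : ∀ i ∈ s, p i ∣ x) : (∏ i ∈ s, p i) ∣ x := by
  classical
  induction s using Finset.induction_on generalizing x with
  | empty => simpa using one_dvd x
  | @insert a s ha ih =>
      obtain ⟨y, hy⟩ := hd a (Finset.mem_insert_self a s)
      have hsy : ∀ i ∈ s, p i ∣ y := by
        intro i hi
        have hia : i ≠ a := by rintro rfl; exact ha hi
        have h1 : p i ∣ p a * y := hy ▸ hd i (Finset.mem_insert_of_mem hi)
        rcases (hp i (Finset.mem_insert_of_mem hi)).2.2 _ _ h1 with h2 | h2
        · exact absurd h2 (hnd i (Finset.mem_insert_of_mem hi) a (Finset.mem_insert_self a s) hia)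
        · exact h2
      have := ih y (fun i hi => hp i (Finset.mem_insert_of_mem hi))
        (fun i hi j hj hij => hnd i (Finset.mem_insert_of_mem hi) j (Finset.mem_insert_of_mem hj) hij)
        hsy
      rw [Finset.prod_insert ha, hy]
      exact mul_dvd_mul_left (p a) this

lemma dvd_prod_sub_prod (s : Finset ℕ) (F G : ℕ → Rg n) (p : Rg n)
    (h : ∀ k ∈ s, p ∣ F k - G k) :
    p ∣ (∏ k ∈ s, F k) - (∏ k ∈ s, G k) := by
  classical
  induction s using Finset.induction_on with
  | empty => simp
  | @insert a s ha ih =>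
      rw [Finset.prod_insert ha, Finset.prod_insert ha]
      have key : F a * ∏ k ∈ s, F k - G a * ∏ k ∈ s, G k
          = F a * ((∏ k ∈ s, F k) - ∏ k ∈ s, G k) + (∏ k ∈ s, G k) * (F a - G a) := by
        ring
      rw [key]
      exact dvd_add (Dvd.dvd.mul_left (ih (fun k hk => h k (Finset.mem_insert_of_mem hk))) _)
        (Dvd.dvd.mul_left (h a (Finset.mem_insert_self a s)) _)

end Aux

namespace Aux
variable {n : ℕ}

lemma hh_apply_le {j : ℕ} (h : j ≤ n+2) (t : Fin (n+1)) :
    hh n j t = (if (t:ℕ)+1 = j-1 then 1 else 0) - (if (t:ℕ)+1 = n+1 then 1 else 0) := by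
  simp [hh, h, ee]

lemma hh_apply_gt {j : ℕ} (h : ¬ j ≤ n+2) (t : Fin (n+1)) :
    hh n j t = (if (t:ℕ)+1 = n then 1 else 0) - (if (t:ℕ)+1 = 2*n+2-j then 1 else 0) := by
  simp [hh, h, ee]

lemma hh_apply (j : ℕ) (t : Fin (n+1)) :
    hh n j t = if j ≤ n+2
      then (if (t:ℕ)+1 = j-1 then 1 else 0) - (if (t:ℕ)+1 = n+1 then 1 else 0)
      else (if (t:ℕ)+1 = n then 1 else 0) - (if (t:ℕ)+1 = 2*n+2-j then 1 else 0) := by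
  by_cases h : j ≤ n+2
  · rw [if_pos h, hh_apply_le h]
  · rw [if_neg h, hh_apply_gt h]

lemma key_lt (hn : 1 ≤ n) {i j : ℕ} (hi : 1 ≤ i) (hj : j ≤ 2*n+2) (hij : i < j) :
    ∃ t : Fin (n+1), hh n i t - hh n j t = -1 := by
  by_cases hA : j ≤ n+2
  · refine ⟨⟨j-2, by omega⟩, ?_⟩
    rw [hh_apply, hh_apply]
    simp only [Fin.val_mk]
    split_ifs <;> omega
  · by_cases hB : i ≤ n+2
    · by_cases hC : i = n+2
      · refine ⟨⟨n-1, by omega⟩, ?_⟩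
        rw [hh_apply, hh_apply]
        simp only [Fin.val_mk]
        split_ifs <;> omega
      · refine ⟨⟨n, by omega⟩, ?_⟩
        rw [hh_apply, hh_apply]
        simp only [Fin.val_mk]
        split_ifs <;> omega
    · refine ⟨⟨2*n+1-i, by omega⟩, ?_⟩
      rw [hh_apply, hh_apply]
      simp only [Fin.val_mk]
      split_ifs <;> omega

lemma key (hn : 1 ≤ n) {i j : ℕ} (hi : memV n i) (hj : memV n j) (hij : i ≠ j) :
    ∃ t : Fin (n+1), hh n i t - hh n j t = 1 ∨ hh n i t - hh n j t = -1 := by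
  rcases lt_or_gt_of_ne hij with h | h
  · obtain ⟨t, ht⟩ := key_lt hn hi.1 hj.2 h
    exact ⟨t, Or.inr ht⟩
  · obtain ⟨t, ht⟩ := key_lt hn hj.1 hi.2 h
    exact ⟨t, Or.inl (by linarith)⟩

lemma hh_ne (hn : 1 ≤ n) {i j : ℕ} (hi : memV n i) (hj : memV n j) (hij : i ≠ j) :
    hh n i ≠ hh n j := by
  obtain ⟨t, ht⟩ := key hn hi hj hij
  intro h
  rw [h] at ht
  rcases ht with ht | ht <;> linarith

lemma hh_add_ne (hn : 1 ≤ n) {i j : ℕ} (hi : memV n i) (hj : memV n j) (hij : i ≠ j)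
    (l : ℕ) : hh n i + hh n j ≠ hh n l + hh n l := by
  intro h
  obtain ⟨t, ht⟩ := key hn hi hj hij
  have h2 := congrFun h t
  simp only [Pi.add_apply] at h2
  set A := hh n i t with hA
  set B := hh n j t with hB
  set C := hh n l t with hC
  clear_value A B C
  rcases ht with ht | ht <;> omega

lemma bar_bar {i : ℕ} (hi : memV n i) : bar n (bar n i) = i := by
  obtain ⟨h1, h2⟩ := hi; simp only [bar]; omega

lemma bar_memV {i : ℕ} (hi : memV n i) : memV n (bar n i) := by
  obtain ⟨h1, h2⟩ := hi
  refine ⟨?_, ?_⟩ <;> simp only [bar] <;> omega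

lemma hh_add_bar {v : ℕ} (hv : memV n v) :
    hh n v + hh n (bar n v) = ee n n - ee n (n+1) := by
  obtain ⟨hv1, hv2⟩ := hv
  funext t
  simp only [Pi.add_apply, Pi.sub_apply, hh_apply, ee, bar]
  split_ifs <;> omega

lemma Mv_apply_ne {v : ℕ} (hv : memV n v) {l : ℕ} (hl : l ≠ v) :
    Mv n v l = ex n (hh n v - hh n l) := by
  by_cases hb : l = bar n v
  · subst hb
    rw [Mv, if_neg hl, if_pos rfl]
    congr 1
    rw [← hh_add_bar hv]
    funext t
    simp only [Pi.sub_apply, Pi.add_apply, Pi.smul_apply, smul_eq_mul]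
    ring
  · rw [Mv, if_neg hl, if_neg hb]

end Aux

namespace Aux
variable {n : ℕ}

lemma mem_Vfin {k : ℕ} : k ∈ Vfin n ↔ memV n k := by
  simp [Vfin, memV, Finset.mem_Icc]

lemma prime_edge (hn : 1 ≤ n) {i l : ℕ} (hi : memV n i) (hl : memV n l) (hne : i ≠ l) :
    Prime (1 - ex n (hh n i - hh n l)) := by
  obtain ⟨t, ht⟩ := key hn hi hl hne
  exact prime_one_sub_ex (c := t) (by simpa [Pi.sub_apply] using ht)

lemma not_dvd_edge (hn : 1 ≤ n) {i i' l : ℕ} (hi : memV n i) (hi' : memV n i')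
    (hl : memV n l) (hii' : i ≠ i') (hil : i ≠ l) (hi'l : i' ≠ l) :
    ¬ (1 - ex n (hh n i - hh n l)) ∣ (1 - ex n (hh n i' - hh n l)) := by
  obtain ⟨t, ht⟩ := key hn hi hl hil
  obtain ⟨t', ht'⟩ := key hn hi' hl hi'l
  apply not_dvd_one_sub (c := t) (c' := t')
  · simpa [Pi.sub_apply] using ht
  · simpa [Pi.sub_apply] using ht'
  · intro h
    exact hh_ne hn hi' hi hii'.symm (sub_left_inj.mp h)
  · intro h
    apply hh_add_ne hn hi hi' hii' l
    funext u
    have e := congrFun h u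
    simp only [Pi.sub_apply, Pi.neg_apply, Pi.add_apply] at e ⊢
    linarith

/-- Divisibility transfer along sign flip of the exponent. -/
lemma dvd_of_rev {w : Fin (n+1) → ℤ} {x : Rg n} (h : (1 - ex n (-w)) ∣ x) :
    (1 - ex n w) ∣ x := (dvd_one_sub_neg w).trans h

lemma axl_eq (i j : ℕ) : axl n i j = hh n j - hh n i := rfl

lemma Mv_self {v : ℕ} : Mv n v v = 1 := by unfold Mv; rw [if_pos rfl]

lemma Dl_mem {P : Finset ℕ} {l : ℕ} (h : l ∈ P) :
    Dl n P l = ∏ k ∈ (Vfin n).filter (fun k => k ∉ P ∧ k ≠ bar n l),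
      (1 - ex n (axl n l k)) := by unfold Dl; rw [if_pos h]

lemma Dl_not_mem {P : Finset ℕ} {l : ℕ} (h : l ∉ P) : Dl n P l = 0 := by
  unfold Dl; rw [if_neg h]

/-- The K-classes form a submodule. -/
def Ksub (n : ℕ) : Submodule (Rg n) (Vt n → Rg n) where
  carrier := {f | isKClassV n f}
  add_mem' := by
    intro f g hf hg i j h1 h2
    have : (f + g) i - (f + g) j = (f i - f j) + (g i - g j) := by
      simp [Pi.add_apply]; ring
    rw [this]
    exact dvd_add (hf i j h1 h2) (hg i j h1 h2)
  zero_mem' := by intro i j h1 h2; simp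
  smul_mem' := by
    intro c f hf i j h1 h2
    have : (c • f) i - (c • f) j = c * (f i - f j) := by
      simp [Pi.smul_apply, smul_eq_mul]; ring
    rw [this]
    exact Dvd.dvd.mul_left (hf i j h1 h2) c

lemma isK_one : isKClassV n (fun _ => (1 : Rg n)) := by
  intro i j h1 h2; simp

lemma isK_mul {f g : Vt n → Rg n} (hf : isKClassV n f) (hg : isKClassV n g) :
    isKClassV n (fun l => f l * g l) := by
  intro i j h1 h2
  have : f i * g i - f j * g j = f i * (g i - g j) + g j * (f i - f j) := by ring
  rw [this]
  exact dvd_add (Dvd.dvd.mul_left (hg i j h1 h2) _) (Dvd.dvd.mul_left (hf i j h1 h2) _)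

lemma isK_prod (s : Finset ℕ) (F : ℕ → Vt n → Rg n)
    (h : ∀ i ∈ s, isKClassV n (F i)) :
    isKClassV n (fun l => ∏ i ∈ s, F i l) := by
  classical
  induction s using Finset.induction_on with
  | empty => simpa using isK_one
  | @insert a s ha ih =>
      have : (fun l => ∏ i ∈ insert a s, F i l)
          = (fun l => F a l * ∏ i ∈ s, F i l) := by
        funext l; rw [Finset.prod_insert ha]
      rw [this]
      exact isK_mul (h a (Finset.mem_insert_self a s))
        (ih (fun i hi => h i (Finset.mem_insert_of_mem hi)))

lemma isK_Mv {v : ℕ} (hv : memV n v) : isKClassV n (fun l => Mv n v l.1) := by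
  intro i j hji hjb
  show (1 - ex n (axl n i.1 j.1)) ∣ Mv n v i.1 - Mv n v j.1
  rw [axl_eq]
  by_cases hiv : i.1 = v
  · have hjv : j.1 ≠ v := hiv ▸ hji
    rw [hiv, Mv_self, Mv_apply_ne hv hjv]
    apply dvd_of_rev
    rw [neg_sub]
  · by_cases hjv : j.1 = v
    · rw [hjv, Mv_self, Mv_apply_ne hv hiv]
      exact ⟨-1, by ring⟩
    · rw [Mv_apply_ne hv hiv, Mv_apply_ne hv hjv]
      refine ⟨-(ex n (hh n v - hh n j.1)), ?_⟩
      have hmul : ex n (hh n j.1 - hh n i.1) * ex n (hh n v - hh n j.1)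
          = ex n (hh n v - hh n i.1) := by
        rw [← ex_add]; congr 1; ring
      linear_combination -hmul

lemma isK_Dl (P : Finset ℕ) (hP1 : ∀ i ∈ P, memV n i) (hP2 : ∀ i ∈ P, bar n i ∉ P) :
    isKClassV n (fun l => Dl n P l.1) := by
  intro i j hji hjb
  show (1 - ex n (axl n i.1 j.1)) ∣ Dl n P i.1 - Dl n P j.1
  set I := i.1 with hIdef
  set J := j.1 with hJdef
  have hI : memV n I := i.2
  have hJ : memV n J := j.2
  by_cases hiP : I ∈ P <;> by_cases hjP : J ∈ P
  · -- both in P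
    rw [Dl_mem hiP, Dl_mem hjP]
    have hbarJ : bar n J ∈ (Vfin n).filter (fun k => k ∉ P ∧ k ≠ bar n I) := by
      rw [Finset.mem_filter, mem_Vfin]
      refine ⟨bar_memV hJ, hP2 J hjP, fun h => hji ?_⟩
      obtain ⟨a1, a2⟩ := hI; obtain ⟨b1, b2⟩ := hJ
      simp only [bar] at h; omega
    have hbarI : bar n I ∈ (Vfin n).filter (fun k => k ∉ P ∧ k ≠ bar n J) := by
      rw [Finset.mem_filter, mem_Vfin]
      refine ⟨bar_memV hI, hP2 I hiP, fun h => hji ?_⟩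
      obtain ⟨a1, a2⟩ := hI; obtain ⟨b1, b2⟩ := hJ
      simp only [bar] at h; omega
    rw [← Finset.mul_prod_erase _ _ hbarJ, ← Finset.mul_prod_erase _ _ hbarI]
    have hset : ((Vfin n).filter (fun k => k ∉ P ∧ k ≠ bar n I)).erase (bar n J)
        = ((Vfin n).filter (fun k => k ∉ P ∧ k ≠ bar n J)).erase (bar n I) := by
      ext k
      simp only [Finset.mem_erase, Finset.mem_filter]
      tauto
    have harg : hh n (bar n J) - hh n I = hh n (bar n I) - hh n J := by
      have h1 := hh_add_bar hJ
      have h2 := hh_add_bar hI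
      funext t
      have e1 := congrFun h1 t
      have e2 := congrFun h2 t
      simp only [Pi.add_apply, Pi.sub_apply] at e1 e2 ⊢
      linarith
    have hval : (1 : Rg n) - ex n (axl n I (bar n J)) = 1 - ex n (axl n J (bar n I)) := by
      rw [axl_eq, axl_eq, harg]
    rw [hset, hval, ← mul_sub]
    apply Dvd.dvd.mul_left
    apply dvd_prod_sub_prod
    intro k hk
    rw [axl_eq, axl_eq, axl_eq]
    refine ⟨ex n (hh n k - hh n J), ?_⟩
    have hmul : ex n (hh n J - hh n I) * ex n (hh n k - hh n J)
        = ex n (hh n k - hh n I) := by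
      rw [← ex_add]; congr 1; ring
    linear_combination hmul
  · -- I ∈ P, J ∉ P
    rw [Dl_mem hiP, Dl_not_mem hjP, sub_zero]
    apply Finset.dvd_prod_of_mem
    rw [Finset.mem_filter, mem_Vfin]
    exact ⟨hJ, hjP, hjb⟩
  · -- I ∉ P, J ∈ P
    rw [Dl_not_mem hiP, Dl_mem hjP, zero_sub]
    rw [dvd_neg]
    have hmem : I ∈ (Vfin n).filter (fun k => k ∉ P ∧ k ≠ bar n J) := by
      rw [Finset.mem_filter, mem_Vfin]
      exact ⟨hI, hiP, fun h => hjb (by rw [h, bar_bar hJ])⟩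
    have h1 : (1 - ex n (axl n I J)) ∣ (1 - ex n (axl n J I)) := by
      rw [axl_eq, axl_eq]
      apply dvd_of_rev
      rw [neg_sub]
    exact h1.trans (Finset.dvd_prod_of_mem _ hmem)
  · rw [Dl_not_mem hiP, Dl_not_mem hjP, sub_zero]
    exact dvd_zero _

end Aux

namespace Aux
variable {n : ℕ}

/-- The generating family. -/
def G (n : ℕ) (m : Fin (2*n+2)) : Vt n → Rg n :=
  if (m : ℕ) ≤ n then (fun l => ∏ i ∈ Finset.Icc 1 (m : ℕ), (1 - Mv n i l.1))
  else (fun l => Dl n (Finset.Icc ((m : ℕ)+1) (2*n+2)) l.1)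

/-- The vertex `m+1`. -/
def vert (n : ℕ) (m : Fin (2*n+2)) : Vt n :=
  ⟨(m : ℕ)+1, ⟨by omega, by have := m.isLt; omega⟩⟩

lemma isK_one_sub {f : Vt n → Rg n} (hf : isKClassV n f) :
    isKClassV n (fun l => 1 - f l) := by
  intro i j h1 h2
  have : (1 - f i) - (1 - f j) = -(f i - f j) := by ring
  rw [this, dvd_neg]
  exact hf i j h1 h2

lemma isK_G (hn : 1 ≤ n) (m : Fin (2*n+2)) : isKClassV n (G n m) := by
  unfold G
  split_ifs with hm
  · apply isK_prod
    intro i hi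
    rw [Finset.mem_Icc] at hi
    have hmem : memV n i := ⟨hi.1, by omega⟩
    exact isK_one_sub (isK_Mv hmem)
  · apply isK_Dl
    · intro i hi
      rw [Finset.mem_Icc] at hi
      exact ⟨by omega, hi.2⟩
    · intro i hi
      rw [Finset.mem_Icc] at hi ⊢
      have := m.isLt
      simp only [bar]
      omega

lemma G_vanish (m : Fin (2*n+2)) (l : Vt n) (hl : l.1 ≤ (m : ℕ)) : G n m l = 0 := by
  unfold G
  split_ifs with hm
  · apply Finset.prod_eq_zero (i := l.1)
    · rw [Finset.mem_Icc]; exact ⟨l.2.1, hl⟩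
    · rw [Mv_self]; ring
  · apply Dl_not_mem
    rw [Finset.mem_Icc]
    omega

lemma G_diag_le (m : Fin (2*n+2)) (hm : (m : ℕ) ≤ n) :
    G n m (vert n m)
      = ∏ i ∈ Finset.Icc 1 (m : ℕ), (1 - ex n (hh n i - hh n ((m : ℕ)+1))) := by
  unfold G
  rw [if_pos hm]
  apply Finset.prod_congr rfl
  intro i hi
  rw [Finset.mem_Icc] at hi
  have hmem : memV n i := ⟨hi.1, by omega⟩
  have hne : (vert n m).1 ≠ i := by simp only [vert]; omega
  rw [Mv_apply_ne hmem hne]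
  rfl

lemma G_diag_gt (m : Fin (2*n+2)) (hm : ¬ (m : ℕ) ≤ n) :
    G n m (vert n m)
      = ∏ k ∈ (Vfin n).filter
          (fun k => k ∉ Finset.Icc ((m : ℕ)+1) (2*n+2) ∧ k ≠ bar n ((m : ℕ)+1)),
          (1 - ex n (hh n k - hh n ((m : ℕ)+1))) := by
  unfold G
  rw [if_neg hm]
  have hmem : (vert n m).1 ∈ Finset.Icc ((m : ℕ)+1) (2*n+2) := by
    rw [Finset.mem_Icc]
    have := m.isLt
    simp only [vert]
    omega
  rw [Dl_mem hmem]
  apply Finset.prod_congr rfl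
  intro k hk
  rfl

lemma memV_vert (m : Fin (2*n+2)) : memV n ((m : ℕ)+1) := (vert n m).2

lemma diag_ne_zero (hn : 1 ≤ n) (m : Fin (2*n+2)) : G n m (vert n m) ≠ 0 := by
  by_cases hm : (m : ℕ) ≤ n
  · rw [G_diag_le m hm]
    rw [Finset.prod_ne_zero_iff]
    intro i hi
    rw [Finset.mem_Icc] at hi
    exact (prime_edge hn ⟨hi.1, by omega⟩ (memV_vert m) (by omega)).ne_zero
  · rw [G_diag_gt m hm]
    rw [Finset.prod_ne_zero_iff]
    intro k hk
    rw [Finset.mem_filter, mem_Vfin, Finset.mem_Icc] at hk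
    exact (prime_edge hn hk.1 (memV_vert m) (by omega)).ne_zero

lemma diag_dvd (hn : 1 ≤ n) (m : Fin (2*n+2)) (f : Vt n → Rg n)
    (hf : isKClassV n f) (hvan : ∀ l : Vt n, l.1 ≤ (m : ℕ) → f l = 0) :
    G n m (vert n m) ∣ f (vert n m) := by
  have hmlt := m.isLt
  by_cases hm : (m : ℕ) ≤ n
  · rw [G_diag_le m hm]
    apply prod_primes_dvd
    · intro i hi
      rw [Finset.mem_Icc] at hi
      exact prime_edge hn ⟨hi.1, by omega⟩ (memV_vert m) (by omega)
    · intro i hi j hj hij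
      rw [Finset.mem_Icc] at hi hj
      exact not_dvd_edge hn ⟨hi.1, by omega⟩ ⟨hj.1, by omega⟩ (memV_vert m)
        hij (by omega) (by omega)
    · intro i hi
      rw [Finset.mem_Icc] at hi
      have hiV : memV n i := ⟨hi.1, by omega⟩
      have hd := hf (vert n m) ⟨i, hiV⟩ (by simp only [vert]; omega)
        (by simp only [vert, bar]; omega)
      rw [hvan ⟨i, hiV⟩ (by simpa using hi.2)] at hd
      rw [sub_zero] at hd
      exact hd
  · rw [G_diag_gt m hm]
    apply prod_primes_dvd
    · intro k hk
      rw [Finset.mem_filter, mem_Vfin, Finset.mem_Icc] at hk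
      exact prime_edge hn hk.1 (memV_vert m) (by omega)
    · intro i hi j hj hij
      rw [Finset.mem_filter, mem_Vfin, Finset.mem_Icc] at hi hj
      exact not_dvd_edge hn hi.1 hj.1 (memV_vert m) hij (by omega) (by omega)
    · intro k hk
      rw [Finset.mem_filter, mem_Vfin, Finset.mem_Icc] at hk
      obtain ⟨hkV, hk1, hk2⟩ := hk
      have hd := hf (vert n m) ⟨k, hkV⟩ (by simp only [vert]; omega)
        (by simp only [vert]; exact hk2)
      have hk3 : k ≤ (m : ℕ) := by
        obtain ⟨a1, a2⟩ := hkV; omega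
      rw [hvan ⟨k, hkV⟩ hk3, sub_zero] at hd
      exact hd

lemma G_mem_Ksub (hn : 1 ≤ n) (m : Fin (2*n+2)) : G n m ∈ Ksub n := isK_G hn m

lemma reduce (hn : 1 ≤ n) :
    ∀ d t, t + d = 2*n+2 → ∀ f : Vt n → Rg n, isKClassV n f →
      (∀ l : Vt n, l.1 ≤ t → f l = 0) →
      f ∈ Submodule.span (Rg n) (Set.range (G n)) := by
  intro d
  induction d with
  | zero =>
      intro t ht f hf hvan
      have : f = 0 := by
        funext l
        exact hvan l (by have := l.2.2; omega)
      rw [this]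
      exact Submodule.zero_mem _
  | succ d ih =>
      intro t ht f hf hvan
      have htle : t < 2*n+2 := by omega
      set m : Fin (2*n+2) := ⟨t, htle⟩ with hmdef
      have hmv : (m : ℕ) = t := rfl
      obtain ⟨c, hc⟩ := diag_dvd hn m f hf (by rw [hmv]; exact hvan)
      set f' : Vt n → Rg n := f - c • G n m with hf'def
      have hf'K : isKClassV n f' := by
        have : f' ∈ Ksub n :=
          Submodule.sub_mem _ hf (Submodule.smul_mem _ c (G_mem_Ksub hn m))
        exact this
      have hvan' : ∀ l : Vt n, l.1 ≤ t+1 → f' l = 0 := by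
        intro l hl
        rcases Nat.lt_or_ge l.1 (t+1) with h | h
        · have h1 : f l = 0 := hvan l (by omega)
          have h2 : G n m l = 0 := G_vanish m l (by omega)
          simp only [hf'def, Pi.sub_apply, Pi.smul_apply, smul_eq_mul, h1, h2]
          ring
        · have hlv : l = vert n m := by
            apply Subtype.ext
            simp only [vert, hmv]
            omega
          simp only [hf'def, Pi.sub_apply, Pi.smul_apply, smul_eq_mul, hlv, hc]
          ring
      have hf'span := ih (t+1) (by omega) f' hf'K hvan'
      have : f = f' + c • G n m := by rw [hf'def]; ring
      rw [this]
      exact Submodule.add_mem _ hf'span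
        (Submodule.smul_mem _ c (Submodule.subset_span ⟨m, rfl⟩))

lemma span_all (hn : 1 ≤ n) (f : Vt n → Rg n) (hf : isKClassV n f) :
    f ∈ Submodule.span (Rg n) (Set.range (G n)) := by
  apply reduce hn (2*n+2) 0 (by omega) f hf
  intro l hl
  have := l.2.1
  omega

lemma linind (hn : 1 ≤ n) : LinearIndependent (Rg n) (G n) := by
  rw [Fintype.linearIndependent_iff]
  intro g hsum
  suffices hS : ∀ N (m : Fin (2*n+2)), (m : ℕ) = N → g m = 0 by
    intro m; exact hS m m rfl
  intro N
  induction N using Nat.strong_induction_on with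
  | _ N ihN =>
      intro m hm
      have hev := congrFun hsum (vert n m)
      rw [Finset.sum_apply] at hev
      simp only [Pi.smul_apply, smul_eq_mul, Pi.zero_apply] at hev
      rw [Finset.sum_eq_single m] at hev
      · rcases mul_eq_zero.mp hev with h | h
        · exact h
        · exact absurd h (diag_ne_zero hn m)
      · intro b _ hbm
        rcases Nat.lt_or_ge (b : ℕ) (m : ℕ) with h | h
        · rw [ihN b (by omega) b rfl, zero_mul]
        · have hbg : (m : ℕ) < (b : ℕ) := by
            rcases Nat.lt_or_ge (m : ℕ) (b : ℕ) with h' | h'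
            · exact h'
            · exact absurd (Fin.ext (by omega)) hbm
          rw [G_vanish b (vert n m) (by simp only [vert]; omega), mul_zero]
      · intro hmu
        exact absurd (Finset.mem_univ m) hmu

end Aux


/-- the set `K(𝒬_{2n})` of K-classes is an `R`-submodule of the functions
`V → R`, free of rank `2n+2`, with basis
`{∏_{i=1}^{m}(1-M_i) : 0 ≤ m ≤ n} ∪ {Δ_{{n+j,…,2n+2}} : 2 ≤ j ≤ n+2}`
(indexed by `m ∈ {0,…,n}` and, for the index `m ∈ {n+1,…,2n+1}`, by `j = m-n+1`, so that
`{n+j,…,2n+2} = {m+1,…,2n+2}`). -/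
theorem kclasses_free_module (n : ℕ) (hn : 1 ≤ n) :
    ∃ (Ksub : Submodule (Rg n) (Vt n → Rg n)) (b : Module.Basis (Fin (2*n+2)) (Rg n) Ksub),
      (Ksub : Set (Vt n → Rg n)) = {f | isKClassV n f} ∧
      ∀ m : Fin (2*n+2), (b m : Vt n → Rg n) =
        if (m : ℕ) ≤ n then (fun l => ∏ i ∈ Finset.Icc 1 (m : ℕ), (1 - Mv n i l.1))
        else (fun l => Dl n (Finset.Icc ((m : ℕ)+1) (2*n+2)) l.1) := by
  classical
  set Kv : Fin (2*n+2) → Aux.Ksub n := fun m => ⟨Aux.G n m, Aux.isK_G hn m⟩ with hKv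
  have hcomp : (⇑(Aux.Ksub n).subtype) ∘ Kv = Aux.G n := rfl
  have hli : LinearIndependent (Rg n) Kv := by
    apply LinearIndependent.of_comp ((Aux.Ksub n).subtype)
    rw [hcomp]
    exact Aux.linind hn
  have hsp : ⊤ ≤ Submodule.span (Rg n) (Set.range Kv) := by
    intro x _
    have hx : isKClassV n x.1 := x.2
    have h1 : x.1 ∈ Submodule.span (Rg n) (Set.range (Aux.G n)) :=
      Aux.span_all hn x.1 hx
    have h2 : Set.range (Aux.G n) = (Aux.Ksub n).subtype '' (Set.range Kv) := by
      ext y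
      constructor
      · rintro ⟨m, rfl⟩; exact ⟨Kv m, ⟨m, rfl⟩, rfl⟩
      · rintro ⟨z, ⟨m, rfl⟩, rfl⟩; exact ⟨m, rfl⟩
    rw [h2, ← Submodule.map_span] at h1
    obtain ⟨y, hy, hyx⟩ := Submodule.mem_map.mp h1
    have hxy : y = x := Subtype.ext hyx
    rwa [← hxy]
  refine ⟨Aux.Ksub n, Module.Basis.mk hli hsp, rfl, ?_⟩
  intro m
  rw [Module.Basis.mk_apply]
  rfl
end
end

section
/- (Surjectivity of φ̃) The range of the ring homomorphism φ̃ : ℤ[𝐌, 𝐃] → (V → R) equals the set K(𝒬_{2n}) of K-classes; in particular, every K-class lies in the subring of functions V → R generated by {M_v, M_v⁻¹ : v ∈ V} ∪ {Δ_P : P admissible}. -/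
noncomputable section

/-- `ī` as a vertex of `V`. -/
def barV (n : ℕ) (v : Vt n) : Vt n :=
  ⟨bar n v.1, by have h := v.2; unfold memV bar at *; omega⟩

/-- The type of formal generators: `𝐌_v` and `𝐌'_v` for `v ∈ V`, and `𝐃_P` for
admissible `P ⊆ V`. -/
def Sig (n : ℕ) : Type := Vt n ⊕ Vt n ⊕ {P : Finset ℕ // admissible n P}

/-- The images of the formal generators: `𝐌_v ↦ M_v`, `𝐌'_v ↦ M_v⁻¹`, `𝐃_P ↦ Δ_P`. -/
def gens (n : ℕ) : Sig n → (Vt n → Rg n)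
  | Sum.inl v => fun l => Mv n v.1 l.1
  | Sum.inr (Sum.inl v) => fun l => MvInv n v.1 l.1
  | Sum.inr (Sum.inr P) => fun l => Dl n P.1 l.1

/-- The ring homomorphism `φ̃ : ℤ[𝐌, 𝐃] → (V → R)`. -/
def phit (n : ℕ) : MvPolynomial (Sig n) ℤ →+* (Vt n → Rg n) :=
  MvPolynomial.eval₂Hom (Int.castRingHom (Vt n → Rg n)) (gens n)

namespace QKaux

variable {n : ℕ}

lemma ex_add (w w' : Fin (n+1) → ℤ) : ex n (w + w') = ex n w * ex n w' := by
  simp [ex, AddMonoidAlgebra.single_mul_single]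

lemma ex_zero : ex n 0 = 1 := rfl

lemma ex_inj {w w' : Fin (n+1) → ℤ} (h : ex n w = ex n w') : w = w' := by
  have := (Finsupp.single_eq_single_iff _ _ _ _).1
    (show Finsupp.single w (1:ℤ) = Finsupp.single w' 1 from congrArg AddMonoidAlgebra.coeff h)
  rcases this with ⟨h1, _⟩ | ⟨h1, _⟩
  · exact h1
  · exact absurd h1 one_ne_zero

lemma isUnit_ex (w : Fin (n+1) → ℤ) : IsUnit (ex n w) :=
  isUnit_iff_exists_inv.2 ⟨ex n (-w), by rw [← ex_add, add_neg_cancel, ex_zero]⟩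

lemma one_sub_ex_dvd_nsmul (a : Fin (n+1) → ℤ) (k : ℕ) :
    (1 - ex n a) ∣ (1 - ex n ((k:ℤ) • a)) := by
  induction k with
  | zero => simp [ex_zero]
  | succ m ih =>
      have : ((m:ℤ)+1) • a = (m:ℤ) • a + a := by rw [add_smul, one_smul]
      push_cast
      rw [this, ex_add]
      have : 1 - ex n ((m:ℤ) • a) * ex n a
          = (1 - ex n ((m:ℤ) • a)) + ex n ((m:ℤ) • a) * (1 - ex n a) := by ring
      rw [this]
      exact dvd_add ih (Dvd.intro_left _ rfl)

lemma one_sub_ex_dvd_zsmul (a : Fin (n+1) → ℤ) (k : ℤ) :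
    (1 - ex n a) ∣ (1 - ex n (k • a)) := by
  rcases le_or_gt 0 k with hk | hk
  · lift k to ℕ using hk; exact one_sub_ex_dvd_nsmul a k
  · obtain ⟨m, hm⟩ := Int.eq_ofNat_of_zero_le (show (0:ℤ) ≤ -k by omega)
    have h1 := one_sub_ex_dvd_nsmul (n := n) a m
    have h2 : 1 - ex n (k • a) = (- ex n (k • a)) * (1 - ex n ((m:ℤ) • a)) := by
      have h3 : ex n (k • a) * ex n ((m:ℤ) • a) = 1 := by
        rw [← ex_add, ← add_smul, show k + (m:ℤ) = 0 by omega, zero_smul, ex_zero]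
      linear_combination -h3
    rw [h2]; exact h1.mul_left _

lemma one_sub_ex_dvd_sub (a w : Fin (n+1) → ℤ) (k : ℤ) :
    (1 - ex n a) ∣ (ex n w - ex n (w + k • a)) := by
  have : ex n w - ex n (w + k • a) = ex n w * (1 - ex n (k • a)) := by
    rw [mul_sub, mul_one, ← ex_add]
  rw [this]
  exact (one_sub_ex_dvd_zsmul a k).mul_left _


/-- The additive map killing `a`, assuming `σ * a t = 1`. -/
def pmap (a : Fin (n+1) → ℤ) (t : Fin (n+1)) (σ : ℤ) : (Fin (n+1) → ℤ) →+ (Fin (n+1) → ℤ) where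
  toFun x := x - (σ * x t) • a
  map_zero' := by simp
  map_add' x y := by
    funext u
    simp [Pi.add_apply, smul_eq_mul]
    ring

def pim (a : Fin (n+1) → ℤ) (t : Fin (n+1)) (σ : ℤ) : Rg n →+* Rg n :=
  AddMonoidAlgebra.mapDomainRingHom ℤ (pmap a t σ)

lemma pim_ex (a : Fin (n+1) → ℤ) (t : Fin (n+1)) (σ : ℤ) (w : Fin (n+1) → ℤ) :
    pim a t σ (ex n w) = ex n (pmap a t σ w) := by
  simp [pim, ex, AddMonoidAlgebra.mapDomain_single]

variable {a : Fin (n+1) → ℤ} {t : Fin (n+1)} {σ : ℤ}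

lemma pmap_self (hσ : σ * a t = 1) : pmap a t σ a = 0 := by
  show a - (σ * a t) • a = 0
  rw [hσ, one_smul, sub_self]

lemma dvd_sub_pim (hσ : σ * a t = 1) (f : Rg n) :
    (1 - ex n a) ∣ (f - pim a t σ f) := by
  have hf : f = ∑ w ∈ f.coeff.support, AddMonoidAlgebra.single w (f.coeff w) := by
    conv_lhs => rw [← AddMonoidAlgebra.sum_coeff_single f]
    rfl
  have hm : pim a t σ f
      = ∑ w ∈ f.coeff.support, AddMonoidAlgebra.single (pmap a t σ w) (f.coeff w) := by
    conv_lhs => rw [hf]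
    rw [map_sum]
    refine Finset.sum_congr rfl (fun w _ => ?_)
    simp [pim, AddMonoidAlgebra.mapDomain_single]
  rw [hm]
  nth_rewrite 1 [hf]
  rw [← Finset.sum_sub_distrib]
  apply Finset.dvd_sum
  intro w _
  have h1 : (AddMonoidAlgebra.single w (f.coeff w) : Rg n) = (f.coeff w : ℤ) • ex n w := by
    simp [ex, AddMonoidAlgebra.smul_single]
  have h2 : (AddMonoidAlgebra.single (pmap a t σ w) (f.coeff w) : Rg n)
      = (f.coeff w : ℤ) • ex n (pmap a t σ w) := by
    simp [ex, AddMonoidAlgebra.smul_single]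
  rw [h1, h2, ← smul_sub]
  have h3 : pmap a t σ w = w + (-(σ * w t)) • a := by
    show w - (σ * w t) • a = _
    rw [neg_smul, sub_eq_add_neg]
  rw [h3, zsmul_eq_mul]
  exact Dvd.dvd.mul_left (one_sub_ex_dvd_sub a w (-(σ * w t))) _

lemma dvd_iff_pim_eq_zero (hσ : σ * a t = 1) (f : Rg n) :
    (1 - ex n a) ∣ f ↔ pim a t σ f = 0 := by
  constructor
  · rintro ⟨g, rfl⟩
    rw [map_mul, map_sub, map_one, pim_ex, pmap_self hσ, ex_zero, sub_self, zero_mul]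
  · intro h
    have := dvd_sub_pim hσ f
    rwa [h, sub_zero] at this

lemma prime_one_sub_ex (hσ : σ * a t = 1) : Prime (1 - ex n a) := by
  refine ⟨?_, ?_, ?_⟩
  · intro h0
    have h1 : ex n a = ex n 0 := by rw [ex_zero]; linear_combination -h0
    have := congrFun (ex_inj h1) t
    simp at this
    rw [this, mul_zero] at hσ
    exact absurd hσ (by norm_num)
  · intro hu
    obtain ⟨v, hv⟩ := isUnit_iff_exists_inv.1 hu
    have := congrArg (pim a t σ) hv
    rw [map_mul, map_one, map_sub, map_one, pim_ex, pmap_self hσ, ex_zero, sub_self,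
      zero_mul] at this
    exact zero_ne_one this
  · intro x y hxy
    rw [dvd_iff_pim_eq_zero hσ] at hxy
    rw [map_mul] at hxy
    rcases mul_eq_zero.1 hxy with h | h
    · exact Or.inl ((dvd_iff_pim_eq_zero hσ x).2 h)
    · exact Or.inr ((dvd_iff_pim_eq_zero hσ y).2 h)

/-- If `1 - e^a` divides `1 - e^b` then `b` is an integer multiple of `a`. -/
lemma exists_smul_of_dvd (hσ : σ * a t = 1) {b : Fin (n+1) → ℤ}
    (h : (1 - ex n a) ∣ (1 - ex n b)) : ∃ s : ℤ, b = s • a := by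
  rw [dvd_iff_pim_eq_zero hσ, map_sub, map_one, pim_ex] at h
  have h1 : ex n (pmap a t σ b) = ex n 0 := by rw [ex_zero]; linear_combination -h
  have h2 := ex_inj h1
  refine ⟨σ * b t, ?_⟩
  have : b - (σ * b t) • a = 0 := h2
  linear_combination (norm := module) this


variable {n : ℕ}

lemma hh_apply (j : ℕ) (h1 : 1 ≤ j) (h2 : j ≤ 2*n+2) (t : Fin (n+1)) :
    hh n j t = (if (t:ℕ)+2 = j ∧ j ≤ n+2 then 1 else 0)
      - (if (t:ℕ) = n ∧ j ≤ n+2 then 1 else 0)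
      + (if (t:ℕ)+1 = n ∧ n+3 ≤ j then 1 else 0)
      - (if (t:ℕ)+1+j = 2*n+2 ∧ n+3 ≤ j then 1 else 0) := by
  have ht := t.2
  by_cases hj : j ≤ n+2
  · rw [hh, if_pos hj]
    simp only [Pi.sub_apply, ee]
    split_ifs <;> omega
  · rw [hh, if_neg hj]
    simp only [Pi.sub_apply, ee]
    split_ifs <;> omega

lemma hh_lo (j : ℕ) (h1 : 1 ≤ j) (h2 : j ≤ n+2) (t : Fin (n+1)) :
    hh n j t = (if (t:ℕ)+2 = j then 1 else 0) - (if (t:ℕ) = n then 1 else 0) := by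
  have ht := t.2
  rw [hh, if_pos h2]
  simp only [Pi.sub_apply, ee]
  split_ifs <;> omega

lemma hh_hi (j : ℕ) (h1 : n+3 ≤ j) (h2 : j ≤ 2*n+2) (t : Fin (n+1)) :
    hh n j t = (if (t:ℕ)+1 = n then 1 else 0) - (if (t:ℕ)+1+j = 2*n+2 then 1 else 0) := by
  have ht := t.2
  rw [hh, if_neg (by omega)]
  simp only [Pi.sub_apply, ee]
  split_ifs <;> omega

lemma hh_bound (j : ℕ) (h1 : 1 ≤ j) (h2 : j ≤ 2*n+2) (t : Fin (n+1)) :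
    -1 ≤ hh n j t ∧ hh n j t ≤ 1 := by
  rw [hh_apply j h1 h2 t]
  split_ifs <;> omega

lemma sum_ite_coord (c : ℕ → ℤ) (p : ℕ) (hp : p ≤ n) :
    ∑ t : Fin (n+1), (if (t:ℕ) = p then c (t:ℕ) else 0) = c p := by
  rw [Fintype.sum_eq_single (⟨p, by omega⟩ : Fin (n+1))]
  · simp
  · intro t ht
    rw [if_neg]
    intro hc
    exact ht (Fin.ext (by simpa using hc))

lemma sum_coord (c : ℕ → ℤ) (j : ℕ) (h1 : 1 ≤ j) (h2 : j ≤ 2*n+2) (hn : 1 ≤ n) :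
    ∑ t : Fin (n+1), c (t:ℕ) * hh n j t
      = (if 2 ≤ j ∧ j ≤ n+2 then c (j-2) else 0) - (if j ≤ n+2 then c n else 0)
        + (if n+3 ≤ j then c (n-1) else 0)
        - (if n+3 ≤ j ∧ j ≤ 2*n+1 then c (2*n+1-j) else 0) := by
  have key : ∀ (p : ℕ) (hp : p ≤ n),
      ∑ t : Fin (n+1), (if (t:ℕ) = p then c (t:ℕ) else 0) = c p := sum_ite_coord c
  by_cases hj2 : j ≤ n+2
  · by_cases hj1 : 2 ≤ j
    · have : ∑ t : Fin (n+1), c (t:ℕ) * hh n j t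
          = ∑ t : Fin (n+1), ((if (t:ℕ) = j-2 then c (t:ℕ) else 0) - (if (t:ℕ) = n then c (t:ℕ) else 0)) := by
        refine Finset.sum_congr rfl (fun t _ => ?_)
        have ht := t.2
        rw [hh_apply j h1 h2 t]
        split_ifs <;> omega
      rw [this, Finset.sum_sub_distrib, key (j-2) (by omega), key n le_rfl]
      rw [if_pos ⟨hj1, hj2⟩, if_pos hj2, if_neg (by omega), if_neg (by omega)]
      ring
    · have : ∑ t : Fin (n+1), c (t:ℕ) * hh n j t
          = ∑ t : Fin (n+1), (0 - (if (t:ℕ) = n then c (t:ℕ) else 0)) := by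
        refine Finset.sum_congr rfl (fun t _ => ?_)
        have ht := t.2
        rw [hh_apply j h1 h2 t]
        split_ifs <;> omega
      rw [this, Finset.sum_sub_distrib, Finset.sum_const_zero, key n le_rfl]
      rw [if_neg (by omega), if_pos hj2, if_neg (by omega), if_neg (by omega)]
      ring
  · by_cases hj3 : j ≤ 2*n+1
    · have : ∑ t : Fin (n+1), c (t:ℕ) * hh n j t
          = ∑ t : Fin (n+1), ((if (t:ℕ) = n-1 then c (t:ℕ) else 0) - (if (t:ℕ) = 2*n+1-j then c (t:ℕ) else 0)) := by
        refine Finset.sum_congr rfl (fun t _ => ?_)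
        have ht := t.2
        rw [hh_apply j h1 h2 t]
        split_ifs <;> omega
      rw [this, Finset.sum_sub_distrib, key (n-1) (by omega), key (2*n+1-j) (by omega)]
      rw [if_neg (by omega), if_neg (by omega), if_pos (by omega), if_pos (by omega)]
      ring
    · have : ∑ t : Fin (n+1), c (t:ℕ) * hh n j t
          = ∑ t : Fin (n+1), ((if (t:ℕ) = n-1 then c (t:ℕ) else 0) - 0) := by
        refine Finset.sum_congr rfl (fun t _ => ?_)
        have ht := t.2
        rw [hh_apply j h1 h2 t]
        split_ifs <;> omega
      rw [this, Finset.sum_sub_distrib, Finset.sum_const_zero, key (n-1) (by omega)]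
      rw [if_neg (by omega), if_neg (by omega), if_pos (by omega), if_neg (by omega)]
      ring

lemma phi_hh (hn : 1 ≤ n) (j : ℕ) (h1 : 1 ≤ j) (h2 : j ≤ 2*n+2) :
    ∑ t : Fin (n+1), ((t:ℕ)+1 : ℤ) * hh n j t = (j:ℤ) - ((n:ℤ)+2) := by
  have := sum_coord (n := n) (fun p => (p:ℤ)+1) j h1 h2 hn
  rw [this]
  split_ifs <;> omega

lemma psi_hh (hn : 1 ≤ n) (j : ℕ) (h1 : 1 ≤ j) (h2 : j ≤ 2*n+2) :
    ∑ t : Fin (n+1), (((t:ℕ):ℤ)+1)^2 * hh n j t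
      = if j ≤ n+2 then ((j:ℤ)-1)^2 - ((n:ℤ)+1)^2 else (n:ℤ)^2 - (2*(n:ℤ)+2-(j:ℤ))^2 := by
  have := sum_coord (n := n) (fun p => ((p:ℤ)+1)^2) j h1 h2 hn
  rw [this]
  by_cases hj2 : j ≤ n+2
  · by_cases hj1 : 2 ≤ j
    · rw [if_pos ⟨hj1, hj2⟩, if_pos hj2, if_neg (by omega), if_neg (by omega), if_pos hj2]
      have e1 : ((j-2:ℕ):ℤ) = (j:ℤ)-2 := by omega
      rw [e1]; ring
    · rw [if_neg (by omega), if_pos hj2, if_neg (by omega), if_neg (by omega), if_pos hj2]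
      have e1 : j = 1 := by omega
      subst e1; push_cast; ring
  · by_cases hj3 : j ≤ 2*n+1
    · rw [if_neg (by omega), if_neg hj2, if_pos (by omega), if_pos (by omega), if_neg hj2]
      have e1 : ((n-1:ℕ):ℤ) = (n:ℤ)-1 := by omega
      have e2 : ((2*n+1-j:ℕ):ℤ) = 2*(n:ℤ)+1-(j:ℤ) := by omega
      rw [e1, e2]; ring
    · rw [if_neg (by omega), if_neg hj2, if_pos (by omega), if_neg (by omega), if_neg hj2]
      have e1 : ((n-1:ℕ):ℤ) = (n:ℤ)-1 := by omega
      have e2 : (j:ℤ) = 2*(n:ℤ)+2 := by omega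
      rw [e1, e2]; ring

lemma hh_at_n (hn : 1 ≤ n) (j : ℕ) (h1 : 1 ≤ j) (h2 : j ≤ 2*n+2) :
    hh n j ⟨n, by omega⟩ = if j ≤ n+1 then -1 else 0 := by
  rw [hh_apply j h1 h2]
  simp only [Fin.val_mk, eq_self_iff_true, true_and, Nat.succ_ne_self, false_and, if_false]
  split_ifs <;> omega

lemma hh_inj (hn : 1 ≤ n) {j j' : ℕ} (hj : memV n j) (hj' : memV n j')
    (h : ∀ t, hh n j t = hh n j' t) : j = j' := by
  have hs : ∑ t : Fin (n+1), ((t:ℕ)+1 : ℤ) * hh n j t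
      = ∑ t : Fin (n+1), ((t:ℕ)+1 : ℤ) * hh n j' t :=
    Finset.sum_congr rfl (fun t _ => by rw [h t])
  rw [phi_hh hn j hj.1 hj.2, phi_hh hn j' hj'.1 hj'.2] at hs
  omega

lemma no_mid (hn : 1 ≤ n) {m k k' : ℕ} (hm : memV n m) (hk : memV n k) (hk' : memV n k')
    (h : ∀ t, hh n k t + hh n k' t = 2 * hh n m t) : k = k' := by
  have hsum : ∀ (c : Fin (n+1) → ℤ),
      (∑ t : Fin (n+1), c t * hh n k t) + (∑ t : Fin (n+1), c t * hh n k' t)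
        = 2 * ∑ t : Fin (n+1), c t * hh n m t := by
    intro c
    rw [← Finset.sum_add_distrib, Finset.mul_sum]
    exact Finset.sum_congr rfl (fun t _ => by linear_combination (c t) * (h t))
  have hphi := hsum (fun t => ((t:ℕ)+1 : ℤ))
  rw [phi_hh hn k hk.1 hk.2, phi_hh hn k' hk'.1 hk'.2, phi_hh hn m hm.1 hm.2] at hphi
  have hpsi := hsum (fun t => (((t:ℕ):ℤ)+1)^2)
  rw [psi_hh hn k hk.1 hk.2, psi_hh hn k' hk'.1 hk'.2, psi_hh hn m hm.1 hm.2] at hpsi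
  have homega := h ⟨n, by omega⟩
  rw [hh_at_n hn k hk.1 hk.2, hh_at_n hn k' hk'.1 hk'.2, hh_at_n hn m hm.1 hm.2] at homega
  by_cases hmlo : m ≤ n+1
  · have hklo : k ≤ n+1 ∧ k' ≤ n+1 := by
      rw [if_pos hmlo] at homega
      split_ifs at homega <;> omega
    rw [if_pos (by omega), if_pos (by omega), if_pos (by omega)] at hpsi
    have hd : ((k:ℤ)-1-((k':ℤ)-1))^2 = 0 := by linear_combination 2*hpsi - ((k:ℤ)-1+((k':ℤ)-1)+2*((m:ℤ)-1))*hphi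
    have := pow_eq_zero_iff (n := 2) (by norm_num) |>.1 hd
    omega
  · have hkhi : ¬ k ≤ n+1 ∧ ¬ k' ≤ n+1 := by
      rw [if_neg hmlo] at homega
      split_ifs at homega <;> omega
    have conv : ∀ j : ℕ, memV n j → ¬ j ≤ n+1 →
        (if j ≤ n+2 then ((j:ℤ)-1)^2 - ((n:ℤ)+1)^2 else (n:ℤ)^2 - (2*(n:ℤ)+2-(j:ℤ))^2)
          = (n:ℤ)^2 - (2*(n:ℤ)+2-(j:ℤ))^2 := by
      intro j hj hjn
      split_ifs with hc
      · have e : (j:ℤ) = (n:ℤ)+2 := by omega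
        rw [e]; ring
      · rfl
    rw [conv k hk hkhi.1, conv k' hk' hkhi.2, conv m hm hmlo] at hpsi
    have hd : ((2*(n:ℤ)+2-(k:ℤ))-(2*(n:ℤ)+2-(k':ℤ)))^2 = 0 := by
      linear_combination -2*hpsi + ((2*(n:ℤ)+2-(k:ℤ))+(2*(n:ℤ)+2-(k':ℤ))+2*(2*(n:ℤ)+2-(m:ℤ)))*hphi
    have := pow_eq_zero_iff (n := 2) (by norm_num) |>.1 hd
    omega

lemma exists_coord (hn : 1 ≤ n) {m k : ℕ} (hm : memV n m) (hk : memV n k) (hkm : k ≠ m) :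
    ∃ t : Fin (n+1), (hh n k t - hh n m t = 1 ∨ hh n k t - hh n m t = -1) := by
  obtain ⟨hm1, hm2⟩ := hm
  obtain ⟨hk1, hk2⟩ := hk
  by_cases hklo : k ≤ n+2
  · by_cases hmlo : m ≤ n+2
    · rcases Nat.lt_or_ge k 2 with hk' | hk'
      · refine ⟨⟨m-2, by omega⟩, ?_⟩
        rw [hh_lo k hk1 hklo, hh_lo m hm1 hmlo]
        simp only [Fin.val_mk]
        split_ifs <;> omega
      · refine ⟨⟨k-2, by omega⟩, ?_⟩
        rw [hh_lo k hk1 hklo, hh_lo m hm1 hmlo]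
        simp only [Fin.val_mk]
        split_ifs <;> omega
    · by_cases hk3 : k ≤ n+1
      · refine ⟨⟨n, by omega⟩, ?_⟩
        rw [hh_lo k hk1 hklo, hh_hi m (by omega) hm2]
        simp only [Fin.val_mk]
        split_ifs <;> omega
      · by_cases hm3 : m ≤ 2*n+1
        · refine ⟨⟨2*n+1-m, by omega⟩, ?_⟩
          rw [hh_lo k hk1 hklo, hh_hi m (by omega) hm2]
          simp only [Fin.val_mk]
          split_ifs <;> omega
        · refine ⟨⟨n-1, by omega⟩, ?_⟩
          rw [hh_lo k hk1 hklo, hh_hi m (by omega) hm2]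
          simp only [Fin.val_mk]
          split_ifs <;> omega
  · by_cases hmlo : m ≤ n+2
    · by_cases hm3 : m ≤ n+1
      · refine ⟨⟨n, by omega⟩, ?_⟩
        rw [hh_hi k (by omega) hk2, hh_lo m hm1 hmlo]
        simp only [Fin.val_mk]
        split_ifs <;> omega
      · by_cases hk3 : k ≤ 2*n+1
        · refine ⟨⟨2*n+1-k, by omega⟩, ?_⟩
          rw [hh_hi k (by omega) hk2, hh_lo m hm1 hmlo]
          simp only [Fin.val_mk]
          split_ifs <;> omega
        · refine ⟨⟨n-1, by omega⟩, ?_⟩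
          rw [hh_hi k (by omega) hk2, hh_lo m hm1 hmlo]
          simp only [Fin.val_mk]
          split_ifs <;> omega
    · by_cases hk3 : k ≤ 2*n+1
      · refine ⟨⟨2*n+1-k, by omega⟩, ?_⟩
        rw [hh_hi k (by omega) hk2, hh_hi m (by omega) hm2]
        simp only [Fin.val_mk]
        split_ifs <;> omega
      · refine ⟨⟨2*n+1-m, by omega⟩, ?_⟩
        rw [hh_hi k (by omega) hk2, hh_hi m (by omega) hm2]
        simp only [Fin.val_mk]
        split_ifs <;> omega

lemma axl_apply (i j : ℕ) (t : Fin (n+1)) : axl n i j t = hh n j t - hh n i t := rfl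

lemma prime_edge (hn : 1 ≤ n) {m k : ℕ} (hm : memV n m) (hk : memV n k) (hkm : k ≠ m) :
    Prime (1 - ex n (axl n m k)) := by
  obtain ⟨t, ht⟩ := exists_coord hn hm hk hkm
  rcases ht with h | h
  · exact prime_one_sub_ex (σ := 1) (t := t) (by rw [one_mul, axl_apply, h])
  · exact prime_one_sub_ex (σ := -1) (t := t) (by rw [axl_apply, h]; ring)

lemma not_dvd_edge (hn : 1 ≤ n) {m k k' : ℕ} (hm : memV n m) (hk : memV n k) (hk' : memV n k')
    (hkm : k ≠ m) (hk'm : k' ≠ m) (hkk' : k ≠ k') :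
    ¬ (1 - ex n (axl n m k)) ∣ (1 - ex n (axl n m k')) := by
  intro hdvd
  obtain ⟨t, ht⟩ := exists_coord hn hm hk hkm
  have key : ∀ σ : ℤ, σ * (axl n m k) t = 1 → False := by
    intro σ hσ
    obtain ⟨s, hs⟩ := exists_smul_of_dvd hσ hdvd
    have hcoord : ∀ u : Fin (n+1), hh n k' u - hh n m u = s * (hh n k u - hh n m u) := by
      intro u
      have := congrFun hs u
      simpa [axl, Pi.sub_apply, Pi.smul_apply, smul_eq_mul] using this
    have hX : hh n k t - hh n m t = 1 ∨ hh n k t - hh n m t = -1 := ht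
    have hb := hh_bound k' hk'.1 hk'.2 t
    have hbm := hh_bound m hm.1 hm.2 t
    have hst := hcoord t
    have hs_bound : -2 ≤ s ∧ s ≤ 2 := by
      rcases hX with h | h <;> rw [h] at hst <;> constructor <;> nlinarith [hb.1, hb.2, hbm.1, hbm.2]
    obtain ⟨hs1, hs2⟩ := hs_bound
    interval_cases s
    · -- s = -2
      obtain ⟨u, hu⟩ := exists_coord hn hm hk' hk'm
      have h1 := hcoord u
      have hb1 := hh_bound k hk.1 hk.2 u
      have hb2 := hh_bound m hm.1 hm.2 u
      rcases hu with h | h <;> omega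
    · -- s = -1
      apply hkk'
      refine no_mid hn hm hk hk' (fun u => ?_)
      have := hcoord u
      omega
    · -- s = 0
      apply hk'm
      refine hh_inj hn hk' hm (fun u => ?_)
      have := hcoord u
      omega
    · -- s = 1
      apply hkk'
      refine hh_inj hn hk hk' (fun u => ?_)
      have := hcoord u
      omega
    · -- s = 2
      obtain ⟨u, hu⟩ := exists_coord hn hm hk' hk'm
      have h1 := hcoord u
      rcases hu with h | h <;> omega
  rcases ht with h | h
  · exact key 1 (by rw [one_mul, axl_apply, h])
  · exact key (-1) (by rw [axl_apply, h]; ring)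

lemma prod_dvd (s : Finset ℕ) (q : ℕ → Rg n)
    (hprime : ∀ i ∈ s, Prime (q i))
    (hpair : ∀ i ∈ s, ∀ j ∈ s, i ≠ j → ¬ q i ∣ q j) :
    ∀ f : Rg n, (∀ i ∈ s, q i ∣ f) → (∏ i ∈ s, q i) ∣ f := by
  induction s using Finset.induction_on with
  | empty => intro f _; simp
  | @insert a s ha ih =>
      intro f hdvd
      obtain ⟨g, hg⟩ := hdvd a (Finset.mem_insert_self a s)
      rw [Finset.prod_insert ha, hg]
      refine mul_dvd_mul_left _ (ih ?_ ?_ g ?_)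
      · exact fun i hi => hprime i (Finset.mem_insert_of_mem hi)
      · exact fun i hi j hj hij => hpair i (Finset.mem_insert_of_mem hi) j (Finset.mem_insert_of_mem hj) hij
      · intro i hi
        have hqi := hprime i (Finset.mem_insert_of_mem hi)
        have : q i ∣ q a * g := hg ▸ hdvd i (Finset.mem_insert_of_mem hi)
        rcases hqi.dvd_or_dvd this with h | h
        · exact absurd h (hpair i (Finset.mem_insert_of_mem hi) a (Finset.mem_insert_self a s)
            (fun he => ha (he ▸ hi)))
        · exact h

lemma prod_sub_prod_dvd (s : Finset ℕ) (d : Rg n) (f g : ℕ → Rg n)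
    (h : ∀ k ∈ s, d ∣ f k - g k) : d ∣ (∏ k ∈ s, f k - ∏ k ∈ s, g k) := by
  induction s using Finset.induction_on with
  | empty => simp
  | @insert a s ha ih =>
      rw [Finset.prod_insert ha, Finset.prod_insert ha]
      have e : f a * ∏ k ∈ s, f k - g a * ∏ k ∈ s, g k
          = f a * (∏ k ∈ s, f k - ∏ k ∈ s, g k) + (f a - g a) * ∏ k ∈ s, g k := by ring
      rw [e]
      exact dvd_add ((ih (fun k hk => h k (Finset.mem_insert_of_mem hk))).mul_left _)
        ((h a (Finset.mem_insert_self a s)).mul_right _)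


variable {n : ℕ}

lemma memV_bar {v : ℕ} (hv : memV n v) : memV n (bar n v) := by
  unfold memV bar at *; omega

lemma hpair_fun (hn : 1 ≤ n) {v : ℕ} (hv : memV n v) :
    hh n v + hh n (bar n v) = ee n n - ee n (n+1) := by
  funext t
  have ht := t.2
  obtain ⟨hv1, hv2⟩ := hv
  simp only [Pi.add_apply, Pi.sub_apply, ee]
  by_cases hlo : v ≤ n
  · rw [hh_lo v hv1 (by omega), hh_hi (bar n v) (by unfold bar; omega) (by unfold bar; omega)]
    unfold bar
    split_ifs <;> omega
  · by_cases hmid : v ≤ n+2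
    · have hb : bar n v = n+1 ∨ bar n v = n+2 := by unfold bar; omega
      rw [hh_lo v hv1 (by omega), hh_lo (bar n v) (by unfold bar; omega) (by unfold bar; omega)]
      unfold bar
      split_ifs <;> omega
    · rw [hh_hi v (by omega) hv2, hh_lo (bar n v) (by unfold bar; omega) (by unfold bar; omega)]
      unfold bar
      split_ifs <;> omega

lemma Mv_eq (hn : 1 ≤ n) {v l : ℕ} (hv : memV n v) (hl : memV n l) :
    Mv n v l = ex n (hh n v - hh n l) := by
  unfold Mv
  by_cases h1 : l = v
  · rw [if_pos h1, h1, sub_self, ex_zero]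
  · rw [if_neg h1]
    by_cases h2 : l = bar n v
    · rw [if_pos h2, h2]
      congr 1
      have hp := hpair_fun hn hv
      funext t
      have := congrFun hp t
      simp only [Pi.add_apply, Pi.sub_apply, Pi.smul_apply, smul_eq_mul] at *
      omega
    · rw [if_neg h2]

lemma MvInv_eq (hn : 1 ≤ n) {v l : ℕ} (hv : memV n v) (hl : memV n l) :
    MvInv n v l = ex n (hh n l - hh n v) := by
  unfold MvInv
  by_cases h1 : l = v
  · rw [if_pos h1, h1, sub_self, ex_zero]
  · rw [if_neg h1]
    by_cases h2 : l = bar n v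
    · rw [if_pos h2, h2]
      congr 1
      have hp := hpair_fun hn hv
      funext t
      have := congrFun hp t
      simp only [Pi.neg_apply, Pi.add_apply, Pi.sub_apply, Pi.smul_apply, smul_eq_mul] at *
      omega
    · rw [if_neg h2]

lemma isK_add {f g : Vt n → Rg n} (hf : isKClassV n f) (hg : isKClassV n g) :
    isKClassV n (f + g) := by
  intro i j h1 h2
  have e : (f + g) i - (f + g) j = (f i - f j) + (g i - g j) := by
    simp only [Pi.add_apply]; ring
  rw [e]
  exact dvd_add (hf i j h1 h2) (hg i j h1 h2)

lemma isK_mul {f g : Vt n → Rg n} (hf : isKClassV n f) (hg : isKClassV n g) :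
    isKClassV n (f * g) := by
  intro i j h1 h2
  have e : (f * g) i - (f * g) j = f i * (g i - g j) + (f i - f j) * g j := by
    simp only [Pi.mul_apply]; ring
  rw [e]
  exact dvd_add ((hg i j h1 h2).mul_left _) ((hf i j h1 h2).mul_right _)

lemma isK_sub {f g : Vt n → Rg n} (hf : isKClassV n f) (hg : isKClassV n g) :
    isKClassV n (f - g) := by
  intro i j h1 h2
  have e : (f - g) i - (f - g) j = (f i - f j) - (g i - g j) := by
    simp only [Pi.sub_apply]; ring
  rw [e]
  exact dvd_sub (hf i j h1 h2) (hg i j h1 h2)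

lemma isK_const (c : Rg n) : isKClassV n (fun _ => c) := by
  intro i j h1 h2
  simp

lemma isK_Mv (hn : 1 ≤ n) (v : Vt n) : isKClassV n (fun l => Mv n v.1 l.1) := by
  intro i j h1 h2
  simp only
  rw [Mv_eq hn v.2 i.2, Mv_eq hn v.2 j.2]
  refine ⟨-ex n (hh n v.1 - hh n j.1), ?_⟩
  have h3 : ex n (axl n i.1 j.1) * ex n (hh n v.1 - hh n j.1) = ex n (hh n v.1 - hh n i.1) := by
    rw [← ex_add]
    congr 1
    show (hh n j.1 - hh n i.1) + (hh n v.1 - hh n j.1) = _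
    abel
  linear_combination -h3

lemma isK_MvInv (hn : 1 ≤ n) (v : Vt n) : isKClassV n (fun l => MvInv n v.1 l.1) := by
  intro i j h1 h2
  simp only
  rw [MvInv_eq hn v.2 i.2, MvInv_eq hn v.2 j.2]
  refine ⟨ex n (hh n i.1 - hh n v.1), ?_⟩
  have h3 : ex n (axl n i.1 j.1) * ex n (hh n i.1 - hh n v.1) = ex n (hh n j.1 - hh n v.1) := by
    rw [← ex_add]
    congr 1
    show (hh n j.1 - hh n i.1) + (hh n i.1 - hh n v.1) = _
    abel
  linear_combination h3


variable {n : ℕ}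

lemma bar_injV {i j : ℕ} (hi : memV n i) (hj : memV n j) (h : bar n i = bar n j) : i = j := by
  unfold memV bar at *; omega

lemma mem_Vfin {k : ℕ} : k ∈ Vfin n ↔ memV n k := by
  unfold Vfin memV; rw [Finset.mem_Icc]

lemma isK_Dl (hn : 1 ≤ n) (P : Finset ℕ) (hP : admissible n P) :
    isKClassV n (fun l => Dl n P l.1) := by
  intro i j h1 h2
  obtain ⟨hne, hmem, hpair⟩ := hP
  simp only [Dl]
  by_cases hiP : i.1 ∈ P
  · by_cases hjP : j.1 ∈ P
    · -- both in P
      rw [if_pos hiP, if_pos hjP]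
      set F : Finset ℕ := (Vfin n).filter
        (fun k => k ∉ P ∧ k ≠ bar n i.1 ∧ k ≠ bar n j.1) with hF
      have hbarj : bar n j.1 ∉ F := by
        simp [hF, Finset.mem_filter]
      have hbari : bar n i.1 ∉ F := by
        simp [hF, Finset.mem_filter]
      have hbij : bar n i.1 ≠ bar n j.1 := by
        intro h
        exact h1 (bar_injV i.2 j.2 h).symm
      have hseti : (Vfin n).filter (fun k => k ∉ P ∧ k ≠ bar n i.1)
          = insert (bar n j.1) F := by
        ext k
        simp only [hF, Finset.mem_filter, Finset.mem_insert]
        constructor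
        · rintro ⟨hk1, hk2, hk3⟩
          by_cases hk4 : k = bar n j.1
          · exact Or.inl hk4
          · exact Or.inr ⟨hk1, hk2, hk3, hk4⟩
        · rintro (rfl | ⟨hk1, hk2, hk3, _⟩)
          · exact ⟨mem_Vfin.2 (memV_bar j.2), hpair j.1 hjP, hbij.symm⟩
          · exact ⟨hk1, hk2, hk3⟩
      have hsetj : (Vfin n).filter (fun k => k ∉ P ∧ k ≠ bar n j.1)
          = insert (bar n i.1) F := by
        ext k
        simp only [hF, Finset.mem_filter, Finset.mem_insert]
        constructor
        · rintro ⟨hk1, hk2, hk3⟩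
          by_cases hk4 : k = bar n i.1
          · exact Or.inl hk4
          · exact Or.inr ⟨hk1, hk2, hk4, hk3⟩
        · rintro (rfl | ⟨hk1, hk2, hk3, hk4⟩)
          · exact ⟨mem_Vfin.2 (memV_bar i.2), hpair i.1 hiP, hbij⟩
          · exact ⟨hk1, hk2, hk4⟩
      rw [hseti, hsetj, Finset.prod_insert hbarj, Finset.prod_insert hbari]
      have hext : axl n i.1 (bar n j.1) = axl n j.1 (bar n i.1) := by
        show hh n (bar n j.1) - hh n i.1 = hh n (bar n i.1) - hh n j.1
        have hpi := hpair_fun hn i.2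
        have hpj := hpair_fun hn j.2
        funext t
        have e1 := congrFun hpi t
        have e2 := congrFun hpj t
        simp only [Pi.add_apply, Pi.sub_apply] at *
        omega
      rw [hext]
      have e : (1 - ex n (axl n j.1 (bar n i.1))) * ∏ k ∈ F, (1 - ex n (axl n i.1 k))
            - (1 - ex n (axl n j.1 (bar n i.1))) * ∏ k ∈ F, (1 - ex n (axl n j.1 k))
          = (1 - ex n (axl n j.1 (bar n i.1)))
            * (∏ k ∈ F, (1 - ex n (axl n i.1 k)) - ∏ k ∈ F, (1 - ex n (axl n j.1 k))) := by
        ring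
      rw [e]
      refine Dvd.dvd.mul_left ?_ _
      refine prod_sub_prod_dvd F _ _ _ (fun k hk => ?_)
      refine ⟨ex n (hh n k - hh n j.1), ?_⟩
      have h3 : ex n (axl n i.1 j.1) * ex n (hh n k - hh n j.1) = ex n (hh n k - hh n i.1) := by
        rw [← ex_add]
        congr 1
        show (hh n j.1 - hh n i.1) + (hh n k - hh n j.1) = _
        abel
      have e2 : (1 - ex n (axl n i.1 k)) - (1 - ex n (axl n j.1 k))
          = ex n (hh n k - hh n j.1) - ex n (hh n k - hh n i.1) := by
        show _ = ex n (hh n k - hh n j.1) - ex n (hh n k - hh n i.1)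
        have : axl n i.1 k = hh n k - hh n i.1 := rfl
        rw [this]
        have : axl n j.1 k = hh n k - hh n j.1 := rfl
        rw [this]
        ring
      rw [e2]
      linear_combination h3
    · -- i ∈ P, j ∉ P
      rw [if_pos hiP, if_neg hjP, sub_zero]
      refine Finset.dvd_prod_of_mem _ ?_
      rw [Finset.mem_filter]
      exact ⟨mem_Vfin.2 j.2, hjP, h2⟩
  · by_cases hjP : j.1 ∈ P
    · -- i ∉ P, j ∈ P
      rw [if_neg hiP, if_pos hjP, zero_sub]
      refine dvd_neg.2 ?_
      have hfac : (1 - ex n (axl n j.1 i.1)) ∣ ∏ k ∈ (Vfin n).filter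
          (fun k => k ∉ P ∧ k ≠ bar n j.1), (1 - ex n (axl n j.1 k)) := by
        refine Finset.dvd_prod_of_mem _ ?_
        rw [Finset.mem_filter]
        refine ⟨mem_Vfin.2 i.2, hiP, ?_⟩
        intro h
        apply h2
        unfold bar at h ⊢
        have := i.2; have := j.2; unfold memV at *
        omega
      refine dvd_trans ?_ hfac
      refine ⟨-ex n (axl n j.1 i.1), ?_⟩
      have h3 : ex n (axl n i.1 j.1) * ex n (axl n j.1 i.1) = 1 := by
        rw [← ex_add, ← ex_zero]
        congr 1
        show (hh n j.1 - hh n i.1) + (hh n i.1 - hh n j.1) = 0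
        abel
      linear_combination -h3
    · rw [if_neg hiP, if_neg hjP, sub_self]
      exact dvd_zero _

lemma isK_range (hn : 1 ≤ n) (p : MvPolynomial (Sig n) ℤ) : isKClassV n (phit n p) := by
  induction p using MvPolynomial.induction_on with
  | C a =>
      have e : phit n (MvPolynomial.C a) = fun _ => (a : Rg n) := by
        funext l
        simp [phit]
  -- may need adjusting
      rw [e]
      exact isK_const _
  | add p q hp hq =>
      rw [map_add]
      exact isK_add hp hq
  | mul_X p s hp =>
      rw [map_mul]
      refine isK_mul hp ?_
      have e : phit n (MvPolynomial.X s) = gens n s := by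
        simp [phit]
      rw [e]
      cases s with
      | inl v => exact isK_Mv hn v
      | inr s' =>
          cases s' with
          | inl v => exact isK_MvInv hn v
          | inr P => exact isK_Dl hn P.1 P.2


variable {n : ℕ}

/-- The constant-functions ring hom. -/
def constF (n : ℕ) : Rg n →+* (Vt n → Rg n) := Pi.constRingHom (Vt n) (Rg n)

lemma constF_apply (c : Rg n) (l : Vt n) : constF n c l = c := rfl

/-- The range of φ̃ as a subring. -/
def S (n : ℕ) : Subring (Vt n → Rg n) := (phit n).range

lemma gens_mem (s : Sig n) : gens n s ∈ S n :=
  ⟨MvPolynomial.X s, by simp [phit]⟩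

lemma const_exp_mem (hn : 1 ≤ n) (a b : ℕ) (ha : memV n a) (hb : memV n b) :
    constF n (ex n (hh n a - hh n b)) ∈ S n := by
  have h1 : constF n (ex n (hh n a - hh n b))
      = gens n (Sum.inl ⟨a, ha⟩) * gens n (Sum.inr (Sum.inl ⟨b, hb⟩)) := by
    funext l
    show ex n (hh n a - hh n b) = Mv n a l.1 * MvInv n b l.1
    rw [Mv_eq hn ha l.2, MvInv_eq hn hb l.2, ← ex_add]
    congr 1
    abel
  rw [h1]
  exact mul_mem (gens_mem _) (gens_mem _)

lemma memV_one : memV n 1 := ⟨le_rfl, by omega⟩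

lemma ee_basis (t : Fin (n+1)) : ee n ((t:ℕ)+1) = hh n ((t:ℕ)+2) - hh n 1 := by
  have ht := t.2
  funext u
  rw [Pi.sub_apply, hh_apply ((t:ℕ)+2) (by omega) (by omega) u, hh_apply 1 (by omega) (by omega) u]
  simp only [ee]
  split_ifs <;> omega

lemma const_ex_basis_mem (hn : 1 ≤ n) (t : Fin (n+1)) :
    constF n (ex n (ee n ((t:ℕ)+1))) ∈ S n ∧ constF n (ex n (-(ee n ((t:ℕ)+1)))) ∈ S n := by
  have ht := t.2
  constructor
  · rw [ee_basis t]
    exact const_exp_mem hn ((t:ℕ)+2) 1 ⟨by omega, by omega⟩ memV_one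
  · rw [ee_basis t, neg_sub]
    exact const_exp_mem hn 1 ((t:ℕ)+2) memV_one ⟨by omega, by omega⟩

lemma const_ex_zsmul_mem (hn : 1 ≤ n) (v : Fin (n+1) → ℤ)
    (hv : constF n (ex n v) ∈ S n) (hv' : constF n (ex n (-v)) ∈ S n) (k : ℤ) :
    constF n (ex n (k • v)) ∈ S n := by
  induction k using Int.induction_on with
  | zero => simp only [zero_smul, ex_zero, map_one]; exact one_mem _
  | succ m ih =>
      have e : ((m:ℤ)+1) • v = (m:ℤ) • v + v := by rw [add_smul, one_smul]
      rw [e, ex_add, map_mul]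
      exact mul_mem ih hv
  | pred m ih =>
      have e : (-(m:ℤ)-1) • v = (-(m:ℤ)) • v + (-v) := by
        funext u
        simp only [Pi.smul_apply, Pi.add_apply, Pi.neg_apply, smul_eq_mul]
        ring
      rw [e, ex_add, map_mul]
      exact mul_mem ih hv'

lemma ex_finsum {ι : Type} [DecidableEq ι] (s : Finset ι) (g : ι → Fin (n+1) → ℤ) :
    ex n (∑ i ∈ s, g i) = ∏ i ∈ s, ex n (g i) := by
  induction s using Finset.induction_on with
  | empty => simp [ex_zero]
  | @insert a s ha ih => rw [Finset.sum_insert ha, Finset.prod_insert ha, ex_add, ih]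

lemma w_decomp (w : Fin (n+1) → ℤ) : w = ∑ t : Fin (n+1), (w t) • ee n ((t:ℕ)+1) := by
  funext u
  rw [Finset.sum_apply]
  rw [Fintype.sum_eq_single u]
  · simp [ee]
  · intro t ht
    simp only [Pi.smul_apply, smul_eq_mul, ee]
    rw [if_neg, mul_zero]
    intro h
    exact ht (Fin.ext (by omega))

lemma const_ex_mem (hn : 1 ≤ n) (w : Fin (n+1) → ℤ) : constF n (ex n w) ∈ S n := by
  rw [w_decomp w, ex_finsum, map_prod]
  refine prod_mem (fun t _ => ?_)
  exact const_ex_zsmul_mem hn _ (const_ex_basis_mem hn t).1 (const_ex_basis_mem hn t).2 _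

lemma const_mem (hn : 1 ≤ n) (c : Rg n) : constF n c ∈ S n := by
  have hf : c = ∑ w ∈ c.coeff.support, AddMonoidAlgebra.single w (c.coeff w) := by
    conv_lhs => rw [← AddMonoidAlgebra.sum_coeff_single c]
    rfl
  rw [hf, map_sum]
  refine sum_mem (fun w _ => ?_)
  have h1 : (AddMonoidAlgebra.single w (c.coeff w) : Rg n) = (c.coeff w : ℤ) • ex n w := by
    simp [ex, AddMonoidAlgebra.smul_single]
  rw [h1, map_zsmul]
  exact zsmul_mem (const_ex_mem hn w) _

/-- `l ↦ e^{-h(l)}` lies in the range. -/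
lemma XXinv_mem (hn : 1 ≤ n) : (fun l : Vt n => ex n (-(hh n l.1))) ∈ S n := by
  have h1 : (fun l : Vt n => ex n (-(hh n l.1)))
      = gens n (Sum.inl ⟨1, memV_one⟩) * constF n (ex n (-(hh n 1))) := by
    funext l
    show ex n (-(hh n l.1)) = Mv n 1 l.1 * ex n (-(hh n 1))
    rw [Mv_eq hn memV_one l.2, ← ex_add]
    congr 1
    abel
  rw [h1]
  exact mul_mem (gens_mem _) (const_mem hn _)


variable {n : ℕ}

lemma main_induction (hn : 1 ≤ n) :
    ∀ j m : ℕ, m + j = 2*n+3 → 1 ≤ m →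
      ∀ f : Vt n → Rg n, isKClassV n f → (∀ l : Vt n, l.1 < m → f l = 0) → f ∈ S n := by
  intro j
  induction j with
  | zero =>
      intro m hmj hm1 f hK hvan
      have hf : f = 0 := by
        funext l
        exact hvan l (by have := l.2.2; omega)
      rw [hf]
      exact zero_mem _
  | succ j ih =>
      intro m hmj hm1 f hK hvan
      have hmV : memV n m := ⟨hm1, by omega⟩
      set v : Vt n := ⟨m, hmV⟩ with hv
      set sfin : Finset ℕ := (Finset.Icc 1 (m-1)).filter (fun k => k ≠ bar n m) with hsfin
      have hmem_sfin : ∀ k ∈ sfin, (1 ≤ k ∧ k ≤ m-1) ∧ k ≠ bar n m := by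
        intro k hk
        rw [hsfin, Finset.mem_filter, Finset.mem_Icc] at hk
        exact hk
      have hdvd : ∀ k ∈ sfin, (1 - ex n (axl n m k)) ∣ f v := by
        intro k hk
        obtain ⟨⟨hk1, hk2⟩, hk3⟩ := hmem_sfin k hk
        have hkV : memV n k := ⟨hk1, by omega⟩
        have h := hK v ⟨k, hkV⟩ (by show k ≠ m; omega) (by show k ≠ bar n m; exact hk3)
        rwa [hvan ⟨k, hkV⟩ (by show k < m; omega), sub_zero] at h
      have hL : (∏ k ∈ sfin, (1 - ex n (axl n m k))) ∣ f v := by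
        refine prod_dvd sfin _ ?_ ?_ (f v) hdvd
        · intro k hk
          obtain ⟨⟨hk1, hk2⟩, hk3⟩ := hmem_sfin k hk
          exact prime_edge hn hmV ⟨hk1, by omega⟩ (by omega)
        · intro k hk k' hk' hkk'
          obtain ⟨⟨hk1, hk2⟩, hk3⟩ := hmem_sfin k hk
          obtain ⟨⟨hk1', hk2'⟩, hk3'⟩ := hmem_sfin k' hk'
          exact not_dvd_edge hn hmV ⟨hk1, by omega⟩ ⟨hk1', by omega⟩ (by omega) (by omega) hkk'
      obtain ⟨c, hc⟩ := hL
      obtain ⟨g, hgmem, hgvan, hgv⟩ : ∃ g : Vt n → Rg n, g ∈ S n ∧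
          (∀ l : Vt n, l.1 < m → g l = 0) ∧ g v = ∏ k ∈ sfin, (1 - ex n (axl n m k)) := by
        by_cases hcase : m ≤ n+1
        · refine ⟨∏ k ∈ Finset.Icc 1 (m-1),
            (1 - constF n (ex n (hh n k)) * (fun l : Vt n => ex n (-(hh n l.1)))), ?_, ?_, ?_⟩
          · refine prod_mem (fun k _ => ?_)
            exact sub_mem (one_mem _) (mul_mem (const_mem hn _) (XXinv_mem hn))
          · intro l hl
            rw [Finset.prod_apply]
            refine Finset.prod_eq_zero (i := l.1) ?_ ?_
            · rw [Finset.mem_Icc]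
              exact ⟨l.2.1, by omega⟩
            · show (1 : Rg n) - constF n (ex n (hh n l.1)) l * ex n (-(hh n l.1)) = 0
              rw [constF_apply, ← ex_add, add_neg_cancel, ex_zero, sub_self]
          · rw [Finset.prod_apply]
            have hflt : sfin = Finset.Icc 1 (m-1) := by
              rw [hsfin]
              refine Finset.filter_true_of_mem (fun k hk => ?_)
              rw [Finset.mem_Icc] at hk
              show k ≠ bar n m
              unfold bar
              omega
            rw [hflt]
            refine Finset.prod_congr rfl (fun k hk => ?_)
            show (1 : Rg n) - constF n (ex n (hh n k)) v * ex n (-(hh n m)) = _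
            rw [constF_apply, ← ex_add]
            congr 1
        · set P : Finset ℕ := (Finset.Icc m (2*n+2)).erase (bar n m) with hPdef
          have hmP : m ∈ P := by
            rw [hPdef, Finset.mem_erase, Finset.mem_Icc]
            refine ⟨?_, le_rfl, by omega⟩
            unfold bar
            omega
          have hadm : admissible n P := by
            refine ⟨⟨m, hmP⟩, ?_, ?_⟩
            · intro i hi
              rw [hPdef, Finset.mem_erase, Finset.mem_Icc] at hi
              exact ⟨by omega, hi.2.2⟩
            · intro i hi
              rw [hPdef, Finset.mem_erase, Finset.mem_Icc] at hi ⊢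
              unfold bar at *
              omega
          refine ⟨fun l => Dl n P l.1, gens_mem (Sum.inr (Sum.inr ⟨P, hadm⟩)), ?_, ?_⟩
          · intro l hl
            simp only [Dl]
            rw [if_neg]
            rw [hPdef, Finset.mem_erase, Finset.mem_Icc]
            push_neg
            intro _
            omega
          · show Dl n P m = _
            simp only [Dl]
            rw [if_pos hmP]
            refine Finset.prod_congr ?_ (fun k _ => rfl)
            ext k
            rw [hsfin, Finset.mem_filter, Finset.mem_filter, Finset.mem_Icc]
            have hv1 : k ∈ Vfin n ↔ 1 ≤ k ∧ k ≤ 2*n+2 := by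
              rw [mem_Vfin]; exact Iff.rfl
            have hv2 : k ∈ P ↔ k ≠ bar n m ∧ (m ≤ k ∧ k ≤ 2*n+2) := by
              rw [hPdef, Finset.mem_erase, Finset.mem_Icc]
            rw [hv1, hv2]
            unfold bar
            constructor
            · rintro ⟨⟨hk1, hk2⟩, hk3, hk4⟩
              refine ⟨⟨hk1, ?_⟩, hk4⟩
              by_cases hge : m ≤ k
              · exact absurd ⟨hk4, hge, hk2⟩ hk3
              · omega
            · rintro ⟨⟨hk1, hk2⟩, hk3⟩
              refine ⟨⟨hk1, by omega⟩, ?_, hk3⟩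
              rintro ⟨-, hge, -⟩
              omega
      -- combine
      have hgK : isKClassV n (g * constF n c) := by
        obtain ⟨q, hq⟩ := mul_mem hgmem (const_mem hn c)
        rw [← hq]
        exact isK_range hn q
      have hK' : isKClassV n (f - g * constF n c) := isK_sub hK hgK
      have hvan' : ∀ l : Vt n, l.1 < m+1 → (f - g * constF n c) l = 0 := by
        intro l hl
        rcases Nat.lt_or_ge l.1 m with hlm | hlm
        · show f l - g l * constF n c l = 0
          rw [hvan l hlm, hgvan l hlm, zero_mul, sub_zero]
        · have hlv : l = v := Subtype.ext (by show (l.1 : ℕ) = m; omega)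
          show f l - g l * constF n c l = 0
          rw [hlv, hgv, constF_apply, ← hc, sub_self]
      have hmem' := ih (m+1) (by omega) (by omega) (f - g * constF n c) hK' hvan'
      have : f = (f - g * constF n c) + g * constF n c := by ring
      rw [this]
      exact add_mem hmem' (mul_mem hgmem (const_mem hn c))


end QKaux

/-- Surjectivity of `φ̃`: the range of `φ̃ : ℤ[𝐌,𝐃] → (V → R)` equals
the set of K-classes. -/
theorem range_phit (n : ℕ) (hn : 1 ≤ n) :
    Set.range ⇑(phit n) = {f : Vt n → Rg n | isKClassV n f} := by
  ext f
  constructor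
  · rintro ⟨p, rfl⟩
    exact QKaux.isK_range hn p
  · intro hf
    have h := QKaux.main_induction hn (2*n+2) 1 (by omega) le_rfl f hf
      (fun l hl => absurd l.2.1 (by omega))
    obtain ⟨p, hp⟩ := RingHom.mem_range.1 h
    exact ⟨p, hp⟩
end
end
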